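/- Let V₁, V₂ : ℝ → ℝ be C¹ and bounded with V₁(x) > 0 > V₂(x) for all x ∈ ℝ. Let ℝ²_∘ = {(x₁,x₂) ∈ ℝ² : x₁·x₂ ≤ 0} and define F on ℝ² by F(x₁,x₂) = (0, V₂(x₂)) if x₁ = 0 and x₂ > 0; F(x₁,x₂) = (V₁(x₁), 0) if x₂ = 0 and x₁ < 0; and F(x₁,x₂) = (V₁(x₁), V₂(x₂)) otherwise. Then ℝ²_∘ is positively invariant, through every point of ℝ²_∘ there is a unique complete integral curve of F that remains in ℝ²_∘, and the resulting semiflow Φ* : ℝ²_∘ × ℝ₊ → ℝ²_∘ is continuous. (Dynamics of two trains on a single track line with a passing loop at 0, with zero waiting thresholds.) -/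

import Mathlib

open Set Filter Topology

/-- The domain `[0, T)`, where `T ∈ (0, ∞]` is encoded as an `EReal`. -/
def eDom (T : EReal) : Set ℝ := {t : ℝ | 0 ≤ t ∧ (t : EReal) < T}

/-- `φ` is an integral curve of the (possibly discontinuous) vector field `F` on `[0,T)`
with initial condition `X₀`: `φ` is continuous on `[0,T)`, `φ 0 = X₀`, and there is a
closed countable subset `D` of `[0,T)` containing `0` such that for every `u ∈ D` there is
`v ∈ D ∪ {T}` with `v > u`, `(u,v) ∩ D = ∅`, `φ` is `C¹` on `(u,v)` with `φ' = F ∘ φ`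
there, and `φ'(t) → F(φ(u))` as `t → u+`; moreover, the intervals `[u,v)` cover `[0,T)`. -/
def IsNetIntegralCurve {E : Type*} [NormedAddCommGroup E] [NormedSpace ℝ E]
    (F : E → E) (X₀ : E) (T : EReal) (φ : ℝ → E) : Prop :=
  0 < T ∧ φ 0 = X₀ ∧ ContinuousOn φ (eDom T) ∧
  ∃ D : Set ℝ, D.Countable ∧ (0 : ℝ) ∈ D ∧ D ⊆ eDom T ∧ closure D ∩ eDom T ⊆ D ∧
    (∀ u ∈ D, ∃ v : EReal, ((∃ w ∈ D, (w : EReal) = v) ∨ v = T) ∧ (u : EReal) < v ∧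
      (∀ w ∈ D, (u : EReal) < (w : EReal) → v ≤ (w : EReal)) ∧
      (∀ t : ℝ, (u : EReal) < (t : EReal) → (t : EReal) < v → HasDerivAt φ (F (φ t)) t) ∧
      ContinuousOn (fun t => F (φ t)) {t : ℝ | (u : EReal) < (t : EReal) ∧ (t : EReal) < v} ∧
      Tendsto (fun t => F (φ t)) (𝓝[>] u) (𝓝 (F (φ u)))) ∧
    (∀ t ∈ eDom T, ∃ u ∈ D, u ≤ t ∧ Ioc u t ∩ D = ∅)

/-- The amenability trajectory condition: through every point `X` there is an integral
curve of the network vector field, defined on some interval `[0, t(X))` with `t(X) > 0`,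
that stays in the event set `E^{ℰ(X)}` of `X`. -/
def AmenableTraj {E A : Type*} [NormedAddCommGroup E] [NormedSpace ℝ E]
    (f : A → E → E) (ℰ : E → A) : Prop :=
  ∀ X : E, ∃ tX : ℝ, 0 < tX ∧ ∃ φ : ℝ → E,
    IsNetIntegralCurve (fun Y => f (ℰ Y) Y) X (tX : EReal) φ ∧
    ∀ t : ℝ, 0 ≤ t → t < tX → ℰ (φ t) = ℰ X

noncomputable section TrainAux

/-- Data for a positive bounded continuous field `W`: a primitive `p` of `W⁻¹` and its
global inverse `q`. -/
structure TPack (W : ℝ → ℝ) : Type where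
  p : ℝ → ℝ
  q : ℝ → ℝ
  hp : ∀ x, HasDerivAt p (W x)⁻¹ x
  p0 : p 0 = 0
  pq : ∀ y, p (q y) = y
  qp : ∀ x, q (p x) = x
  cq : Continuous q
  mono : StrictMono p

variable {W : ℝ → ℝ}

theorem TPack.cp (P : TPack W) : Continuous P.p :=
  continuous_iff_continuousAt.2 fun x => (P.hp x).differentiableAt.continuousAt

theorem TPack.hq (P : TPack W) (hpos : ∀ x, 0 < W x) (y : ℝ) :
    HasDerivAt P.q (W (P.q y)) y := by
  have h := HasDerivAt.of_local_left_inverse (P.cq.continuousAt) (P.hp (P.q y))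
    (inv_ne_zero (ne_of_gt (hpos (P.q y)))) (Eventually.of_forall P.pq)
  simpa using h

theorem TPack.q0 (P : TPack W) : P.q 0 = 0 := by
  have := P.qp 0; rwa [P.p0] at this

theorem TPack.qmono (P : TPack W) : StrictMono P.q := by
  intro a b hab
  rcases lt_trichotomy (P.q a) (P.q b) with h | h | h
  · exact h
  · exfalso
    have := congrArg P.p h
    rw [P.pq, P.pq] at this
    exact hab.ne this
  · exfalso
    have := P.mono h
    rw [P.pq, P.pq] at this
    exact absurd this (not_lt.2 hab.le)

theorem TPack.q_neg_iff (P : TPack W) {y : ℝ} : P.q y < 0 ↔ y < 0 := by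
  constructor
  · intro h; have := P.mono h; rwa [P.pq, P.p0] at this
  · intro h; have := P.qmono h; rwa [P.q0] at this

theorem TPack.q_pos_iff (P : TPack W) {y : ℝ} : 0 < P.q y ↔ 0 < y := by
  constructor
  · intro h
    have : P.p 0 < P.p (P.q y) := P.mono h
    rwa [P.pq, P.p0] at this
  · intro h; have := P.qmono h; rwa [P.q0] at this

theorem TPack.q_eq_zero_iff (P : TPack W) {y : ℝ} : P.q y = 0 ↔ y = 0 := by
  constructor
  · intro h; have := congrArg P.p h; rwa [P.pq, P.p0] at this
  · rintro rfl; exact P.q0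

theorem TPack.p_neg_iff (P : TPack W) {x : ℝ} : P.p x < 0 ↔ x < 0 := by
  constructor
  · intro h
    by_contra h'
    have := P.mono.le_iff_le.2 (not_lt.1 h' : (0:ℝ) ≤ x)
    rw [P.p0] at this
    exact absurd this (not_le.2 h)
  · intro h
    have := P.mono h
    rwa [P.p0] at this

theorem TPack.p_pos_iff (P : TPack W) {x : ℝ} : 0 < P.p x ↔ 0 < x := by
  constructor
  · intro h
    by_contra h'
    have := P.mono.le_iff_le.2 (not_lt.1 h' : x ≤ 0)
    rw [P.p0] at this
    exact absurd this (not_le.2 h)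
  · intro h
    have := P.mono h
    rwa [P.p0] at this

theorem TPack.p_eq_zero_iff (P : TPack W) {x : ℝ} : P.p x = 0 ↔ x = 0 := by
  constructor
  · intro h
    have := congrArg P.q h
    rwa [P.qp, ← P.p0, P.qp] at this
  · rintro rfl; exact P.p0

theorem TPack.p_nonpos_iff (P : TPack W) {x : ℝ} : P.p x ≤ 0 ↔ x ≤ 0 := by
  rw [← not_lt, ← not_lt, P.p_pos_iff]

theorem TPack.p_nonneg_iff (P : TPack W) {x : ℝ} : 0 ≤ P.p x ↔ 0 ≤ x := by
  rw [← not_lt, ← not_lt, P.p_neg_iff]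

theorem TPack.q_nonpos_iff (P : TPack W) {y : ℝ} : P.q y ≤ 0 ↔ y ≤ 0 := by
  rw [← not_lt, ← not_lt, P.q_pos_iff]

theorem TPack.q_nonneg_iff (P : TPack W) {y : ℝ} : 0 ≤ P.q y ↔ 0 ≤ y := by
  rw [← not_lt, ← not_lt, P.q_neg_iff]

/-- Construct a `TPack` for a continuous positive field bounded above. -/
noncomputable def mkTPack (W : ℝ → ℝ) (hW : Continuous W) (hpos : ∀ x, 0 < W x)
    (M : ℝ) (hM : ∀ x, W x ≤ M) : TPack W := by
  have hMpos : 0 < M := lt_of_lt_of_le (hpos 0) (hM 0)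
  have hWne : ∀ x, W x ≠ 0 := fun x => (hpos x).ne'
  have hWinv : Continuous fun x => (W x)⁻¹ := hW.inv₀ hWne
  set p : ℝ → ℝ := fun x => ∫ s in (0:ℝ)..x, (W s)⁻¹ with hpdef
  have hp : ∀ x, HasDerivAt p (W x)⁻¹ x := by
    intro x
    exact intervalIntegral.integral_hasDerivAt_right
      (hWinv.intervalIntegrable _ _)
      (hWinv.stronglyMeasurableAtFilter _ _)
      hWinv.continuousAt
  have hdiff : Differentiable ℝ p := fun x => (hp x).differentiableAt
  have hderiv : ∀ x, deriv p x = (W x)⁻¹ := fun x => (hp x).deriv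
  have hmono : StrictMono p := strictMono_of_deriv_pos (fun x => by
    rw [hderiv]; exact inv_pos.2 (hpos x))
  -- lower bound p x ≥ x / M for x ≥ 0, upper for x ≤ 0
  have hlin : Monotone fun x => p x - M⁻¹ * x := by
    apply monotone_of_deriv_nonneg (by fun_prop)
    intro x
    have : deriv (fun x => p x - M⁻¹ * x) x = (W x)⁻¹ - M⁻¹ := by
      rw [deriv_fun_sub (hdiff x) (by fun_prop), hderiv, deriv_const_mul _ (by fun_prop)]
      simp
    rw [this]
    have : M⁻¹ ≤ (W x)⁻¹ := inv_anti₀ (hpos x) (hM x)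
    linarith
  have hlge : ∀ x, 0 ≤ x → M⁻¹ * x ≤ p x := by
    intro x hx
    have := hlin hx
    simp only [mul_zero, sub_zero] at this
    have hp0 : p 0 = 0 := by simp [hpdef]
    rw [hp0] at this; simpa using this
  have hlle : ∀ x, x ≤ 0 → p x ≤ M⁻¹ * x := by
    intro x hx
    have := hlin hx
    simp only [mul_zero, sub_zero] at this
    have hp0 : p 0 = 0 := by simp [hpdef]
    rw [hp0] at this; linarith [this]
  have htop : Tendsto p atTop atTop := by
    apply tendsto_atTop_mono' _ _ (tendsto_const_mul_atTop_of_pos (inv_pos.2 hMpos) |>.2 tendsto_id)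
    filter_upwards [eventually_ge_atTop (0:ℝ)] with x hx
    exact hlge x hx
  have hbot : Tendsto p atBot atBot := by
    apply tendsto_atBot_mono' _ _ (tendsto_const_mul_atBot_of_pos (inv_pos.2 hMpos) |>.2 tendsto_id)
    filter_upwards [eventually_le_atBot (0:ℝ)] with x hx
    exact hlle x hx
  have hsurj : Function.Surjective p := hdiff.continuous.surjective htop hbot
  let e : ℝ ≃o ℝ := StrictMono.orderIsoOfSurjective p hmono hsurj
  refine ⟨p, e.symm, hp, by simp [hpdef], ?_, ?_, ?_, hmono⟩
  · exact fun y => StrictMono.orderIsoOfSurjective_self_symm_apply p hmono hsurj y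
  · exact fun x => StrictMono.orderIsoOfSurjective_symm_apply_self p hmono hsurj x
  · exact e.symm.continuous


theorem hasDerivAt_fst {ψ : ℝ → ℝ × ℝ} {v : ℝ × ℝ} {s : ℝ} (h : HasDerivAt ψ v s) :
    HasDerivAt (fun r => (ψ r).1) v.1 s := by
  have h2 := h.hasFDerivAt.fst
  have he : (ContinuousLinearMap.fst ℝ ℝ ℝ).comp (ContinuousLinearMap.toSpanSingleton ℝ v) =
      ContinuousLinearMap.toSpanSingleton ℝ v.1 := by ext; simp
  rw [he] at h2
  simpa using h2.hasDerivAt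

theorem hasDerivAt_snd {ψ : ℝ → ℝ × ℝ} {v : ℝ × ℝ} {s : ℝ} (h : HasDerivAt ψ v s) :
    HasDerivAt (fun r => (ψ r).2) v.2 s := by
  have h2 := h.hasFDerivAt.snd
  have he : (ContinuousLinearMap.snd ℝ ℝ ℝ).comp (ContinuousLinearMap.toSpanSingleton ℝ v) =
      ContinuousLinearMap.toSpanSingleton ℝ v.2 := by ext; simp
  rw [he] at h2
  simpa using h2.hasDerivAt

/-- A function continuous on `[A,B]` with constant derivative `r` on `(A,B)` is affine. -/
theorem const_slope {f : ℝ → ℝ} {A B r : ℝ} (hAB : A < B)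
    (hc : ContinuousOn f (Icc A B)) (hd : ∀ s ∈ Ioo A B, HasDerivAt f r s) :
    f B = f A + r * (B - A) := by
  set k : ℝ → ℝ := fun s => f s - r * s with hk
  have hkc : ContinuousOn k (Icc A B) := hc.sub (continuous_const.mul continuous_id).continuousOn
  have hkconst : ∀ a' ∈ Ioo A B, k B = k a' := by
    intro a' ha'
    have h1 : ContinuousOn k (Icc a' B) :=
      hkc.mono (Icc_subset_Icc ha'.1.le le_rfl)
    have h2 : ∀ x ∈ Ico a' B, HasDerivWithinAt k 0 (Ici x) x := by
      intro x hx
      have hxm : x ∈ Ioo A B := ⟨lt_of_lt_of_le ha'.1 hx.1, hx.2⟩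
      have : HasDerivAt k (r - r * 1) x := (hd x hxm).sub (((hasDerivAt_id x).const_mul r))
      simpa using this.hasDerivWithinAt
    exact (constant_of_has_deriv_right_zero h1 h2 B (right_mem_Icc.2 ha'.2.le)).trans rfl
  -- take the limit a' → A⁺
  have hlim : Tendsto k (𝓝[>] A) (𝓝 (k A)) := by
    have h1 : ContinuousWithinAt k (Icc A B) A := hkc A (left_mem_Icc.2 hAB.le)
    exact h1.mono_left (by
      rw [← nhdsWithin_Ioc_eq_nhdsGT hAB]
      exact nhdsWithin_mono _ Ioc_subset_Icc_self)
  have hev : ∀ᶠ a' in 𝓝[>] A, k a' = k B := by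
    filter_upwards [Ioo_mem_nhdsGT_of_mem (left_mem_Ico.2 hAB)] with a' ha'
    exact (hkconst a' ha').symm
  have h3 : Tendsto k (𝓝[>] A) (𝓝 (k B)) :=
    tendsto_const_nhds.congr' (hev.mono fun x h => h.symm)
  have h4 : k A = k B := tendsto_nhds_unique hlim h3
  have : f A - r * A = f B - r * B := h4
  linarith


theorem eDom_top : eDom ⊤ = Ici (0:ℝ) := by
  ext t; simp [eDom, EReal.coe_lt_top]

/-- Context for the two-train problem. -/
structure TCtx : Type where
  V₁ : ℝ → ℝ
  V₂ : ℝ → ℝ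
  F : ℝ × ℝ → ℝ × ℝ
  P₁ : TPack V₁
  P₂ : TPack (fun x => -V₂ x)
  hsign : ∀ x, V₂ x < 0 ∧ 0 < V₁ x
  hV₁c : Continuous V₁
  hV₂c : Continuous V₂
  hFdef : F = fun X => if X.1 = 0 ∧ 0 < X.2 then ((0:ℝ), V₂ X.2)
    else if X.2 = 0 ∧ X.1 < 0 then (V₁ X.1, (0:ℝ)) else (V₁ X.1, V₂ X.2)

namespace TCtx
variable (C : TCtx)

noncomputable def G : ℝ → ℝ := C.P₁.p
noncomputable def Gi : ℝ → ℝ := C.P₁.q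
noncomputable def K : ℝ → ℝ := C.P₂.p
noncomputable def Ki : ℝ → ℝ := C.P₂.q
noncomputable def g0 (X : ℝ × ℝ) : ℝ := C.G X.1
noncomputable def h0 (X : ℝ × ℝ) : ℝ := -(C.K X.2)
noncomputable def t1 (X : ℝ × ℝ) : ℝ := max (-(C.g0 X)) 0
noncomputable def t2 (X : ℝ × ℝ) : ℝ := max (-(C.h0 X)) 0
noncomputable def tm (X : ℝ × ℝ) : ℝ := max (C.t1 X) (C.t2 X)
noncomputable def u1 (X : ℝ × ℝ) (t : ℝ) : ℝ := min t (C.t1 X) + max (t - C.tm X) 0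
noncomputable def u2 (X : ℝ × ℝ) (t : ℝ) : ℝ := min t (C.t2 X) + max (t - C.tm X) 0
noncomputable def Phi (X : ℝ × ℝ) (t : ℝ) : ℝ × ℝ :=
  (C.Gi (C.g0 X + C.u1 X t), C.Ki (-(C.h0 X + C.u2 X t)))

theorem t1_nonneg (X : ℝ × ℝ) : 0 ≤ C.t1 X := le_max_right _ _
theorem t2_nonneg (X : ℝ × ℝ) : 0 ≤ C.t2 X := le_max_right _ _
theorem tm_nonneg (X : ℝ × ℝ) : 0 ≤ C.tm X := le_trans (C.t1_nonneg X) (le_max_left _ _)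
theorem t1_le_tm (X : ℝ × ℝ) : C.t1 X ≤ C.tm X := le_max_left _ _
theorem t2_le_tm (X : ℝ × ℝ) : C.t2 X ≤ C.tm X := le_max_right _ _

theorem cG : Continuous C.G := C.P₁.cp
theorem cGi : Continuous C.Gi := C.P₁.cq
theorem cK : Continuous C.K := C.P₂.cp
theorem cKi : Continuous C.Ki := C.P₂.cq

theorem V₁_pos (x : ℝ) : 0 < C.V₁ x := (C.hsign x).2
theorem V₂_neg (x : ℝ) : C.V₂ x < 0 := (C.hsign x).1

theorem hGi (y : ℝ) : HasDerivAt C.Gi (C.V₁ (C.Gi y)) y :=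
  C.P₁.hq (fun x => C.V₁_pos x) y

theorem hKi (y : ℝ) : HasDerivAt C.Ki (-(C.V₂ (C.Ki y))) y := by
  have := C.P₂.hq (fun x => neg_pos.2 (C.V₂_neg x)) y
  simpa [Ki] using this

theorem Gi_nonpos_iff {y : ℝ} : C.Gi y ≤ 0 ↔ y ≤ 0 := C.P₁.q_nonpos_iff
theorem Gi_nonneg_iff {y : ℝ} : 0 ≤ C.Gi y ↔ 0 ≤ y := C.P₁.q_nonneg_iff
theorem Gi_neg_iff {y : ℝ} : C.Gi y < 0 ↔ y < 0 := C.P₁.q_neg_iff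
theorem Gi_pos_iff {y : ℝ} : 0 < C.Gi y ↔ 0 < y := C.P₁.q_pos_iff
theorem Gi_eq_zero_iff {y : ℝ} : C.Gi y = 0 ↔ y = 0 := C.P₁.q_eq_zero_iff
theorem Ki_nonpos_iff {y : ℝ} : C.Ki y ≤ 0 ↔ y ≤ 0 := C.P₂.q_nonpos_iff
theorem Ki_nonneg_iff {y : ℝ} : 0 ≤ C.Ki y ↔ 0 ≤ y := C.P₂.q_nonneg_iff
theorem Ki_neg_iff {y : ℝ} : C.Ki y < 0 ↔ y < 0 := C.P₂.q_neg_iff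
theorem Ki_pos_iff {y : ℝ} : 0 < C.Ki y ↔ 0 < y := C.P₂.q_pos_iff
theorem Ki_eq_zero_iff {y : ℝ} : C.Ki y = 0 ↔ y = 0 := C.P₂.q_eq_zero_iff
theorem Gi_zero : C.Gi 0 = 0 := C.P₁.q0
theorem Ki_zero : C.Ki 0 = 0 := C.P₂.q0
theorem G_nonpos_iff {x : ℝ} : C.G x ≤ 0 ↔ x ≤ 0 := C.P₁.p_nonpos_iff
theorem G_nonneg_iff {x : ℝ} : 0 ≤ C.G x ↔ 0 ≤ x := C.P₁.p_nonneg_iff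
theorem G_neg_iff {x : ℝ} : C.G x < 0 ↔ x < 0 := C.P₁.p_neg_iff
theorem K_nonneg_iff {x : ℝ} : 0 ≤ C.K x ↔ 0 ≤ x := C.P₂.p_nonneg_iff
theorem K_pos_iff {x : ℝ} : 0 < C.K x ↔ 0 < x := C.P₂.p_pos_iff

theorem G_pos_iff {x : ℝ} : 0 < C.G x ↔ 0 < x := C.P₁.p_pos_iff
theorem K_neg_iff {x : ℝ} : C.K x < 0 ↔ x < 0 := C.P₂.p_neg_iff
theorem G_zero : C.G 0 = 0 := C.P₁.p0
theorem K_zero : C.K 0 = 0 := C.P₂.p0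

theorem G_eq_zero_iff {x : ℝ} : C.G x = 0 ↔ x = 0 := C.P₁.p_eq_zero_iff
theorem K_eq_zero_iff {x : ℝ} : C.K x = 0 ↔ x = 0 := C.P₂.p_eq_zero_iff

theorem F1_eq (Y : ℝ × ℝ) (h : ¬(Y.1 = 0 ∧ 0 < Y.2)) : (C.F Y).1 = C.V₁ Y.1 := by
  rw [C.hFdef]; by_cases h2 : Y.2 = 0 ∧ Y.1 < 0 <;> simp [h, h2]

theorem F2_eq (Y : ℝ × ℝ) (h : ¬(Y.2 = 0 ∧ Y.1 < 0)) : (C.F Y).2 = C.V₂ Y.2 := by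
  rw [C.hFdef]
  by_cases h1 : Y.1 = 0 ∧ 0 < Y.2 <;> simp [h, h1]

theorem F_eq3 (Y : ℝ × ℝ) (h1 : ¬(Y.1 = 0 ∧ 0 < Y.2)) (h2 : ¬(Y.2 = 0 ∧ Y.1 < 0)) :
    C.F Y = (C.V₁ Y.1, C.V₂ Y.2) := by
  rw [C.hFdef]; simp [h1, h2]

theorem F_eq1 (Y : ℝ × ℝ) (h1 : Y.1 = 0 ∧ 0 < Y.2) : C.F Y = (0, C.V₂ Y.2) := by
  rw [C.hFdef]; simp [h1]

theorem F_eq2 (Y : ℝ × ℝ) (h1 : ¬(Y.1 = 0 ∧ 0 < Y.2)) (h2 : Y.2 = 0 ∧ Y.1 < 0) :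
    C.F Y = (C.V₁ Y.1, 0) := by
  rw [C.hFdef]; simp [h1, h2]

theorem hasDerivAt_gc {ψ : ℝ → ℝ × ℝ} {s : ℝ} (hd : HasDerivAt ψ (C.F (ψ s)) s)
    (h : ¬((ψ s).1 = 0 ∧ 0 < (ψ s).2)) :
    HasDerivAt (fun r => C.G (ψ r).1) 1 s := by
  have h1 : HasDerivAt (fun r => (ψ r).1) (C.F (ψ s)).1 s := hasDerivAt_fst hd
  rw [C.F1_eq _ h] at h1
  have h2 := (C.P₁.hp ((ψ s).1)).comp s h1
  have hne : C.V₁ ((ψ s).1) ≠ 0 := (C.V₁_pos _).ne'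
  have : HasDerivAt (fun r => C.G ((ψ r).1)) ((C.V₁ ((ψ s).1))⁻¹ * C.V₁ ((ψ s).1)) s := h2
  rw [inv_mul_cancel₀ hne] at this
  exact this

theorem hasDerivAt_hc {ψ : ℝ → ℝ × ℝ} {s : ℝ} (hd : HasDerivAt ψ (C.F (ψ s)) s)
    (h : ¬((ψ s).2 = 0 ∧ (ψ s).1 < 0)) :
    HasDerivAt (fun r => -(C.K (ψ r).2)) 1 s := by
  have h1 : HasDerivAt (fun r => (ψ r).2) (C.F (ψ s)).2 s := hasDerivAt_snd hd
  rw [C.F2_eq _ h] at h1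
  have h2 := (C.P₂.hp ((ψ s).2)).comp s h1
  have hne : C.V₂ ((ψ s).2) ≠ 0 := (C.V₂_neg _).ne
  have h3 : HasDerivAt (fun r => C.K ((ψ r).2)) ((-(C.V₂ ((ψ s).2)))⁻¹ * C.V₂ ((ψ s).2)) s := h2
  have he : (-(C.V₂ ((ψ s).2)))⁻¹ * C.V₂ ((ψ s).2) = -1 := by
    field_simp
  rw [he] at h3
  have := h3.neg
  rw [neg_neg] at this; exact this

theorem gc_slope {ψ : ℝ → ℝ × ℝ} {A B : ℝ} (hAB : A < B) (hco : ContinuousOn ψ (Icc A B))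
    (hd : ∀ s ∈ Ioo A B, HasDerivAt ψ (C.F (ψ s)) s)
    (hreg : ∀ s ∈ Ioo A B, ¬((ψ s).1 = 0 ∧ 0 < (ψ s).2)) :
    C.G (ψ B).1 = C.G (ψ A).1 + (B - A) := by
  have h := const_slope (f := fun r => C.G (ψ r).1) hAB
    (C.cG.comp_continuousOn (continuous_fst.comp_continuousOn hco))
    (fun s hs => C.hasDerivAt_gc (hd s hs) (hreg s hs))
  simpa using h

theorem hc_slope {ψ : ℝ → ℝ × ℝ} {A B : ℝ} (hAB : A < B) (hco : ContinuousOn ψ (Icc A B))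
    (hd : ∀ s ∈ Ioo A B, HasDerivAt ψ (C.F (ψ s)) s)
    (hreg : ∀ s ∈ Ioo A B, ¬((ψ s).2 = 0 ∧ (ψ s).1 < 0)) :
    -(C.K (ψ B).2) = -(C.K (ψ A).2) + (B - A) := by
  have h := const_slope (f := fun r => -(C.K (ψ r).2)) hAB
    ((C.cK.comp_continuousOn (continuous_snd.comp_continuousOn hco)).neg)
    (fun s hs => C.hasDerivAt_hc (hd s hs) (hreg s hs))
  simpa using h

/-- Extract, for any `t ≥ 0`, an interval `(t,c)` on which an integral curve is
differentiable with derivative `F ∘ ψ`, together with the right-limit property at `t`. -/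
theorem piece {ψ : ℝ → ℝ × ℝ} {X : ℝ × ℝ} (hψ : IsNetIntegralCurve C.F X ⊤ ψ)
    {t : ℝ} (ht : 0 ≤ t) :
    ∃ c, t < c ∧ (∀ s, t < s → s < c → HasDerivAt ψ (C.F (ψ s)) s) ∧
      Tendsto (fun s => C.F (ψ s)) (𝓝[>] t) (𝓝 (C.F (ψ t))) := by
  obtain ⟨-, -, -, D, -, -, -, -, hstruct, hcover⟩ := hψ
  obtain ⟨u, huD, hut, hIoc⟩ := hcover t (by rw [eDom_top]; exact ht)
  obtain ⟨v, hv1, hv2, -, hderiv, hcont, htend⟩ := hstruct u huD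
  have htv : (t : EReal) < v := by
    rcases eq_or_lt_of_le hut with rfl | hlt
    · exact hv2
    · by_contra hle
      push_neg at hle
      rcases hv1 with ⟨w, hwD, rfl⟩ | rfl
      · have hwt : w ≤ t := EReal.coe_le_coe_iff.1 hle
        have hwu : u < w := EReal.coe_lt_coe_iff.1 hv2
        have hmem : w ∈ Ioc u t ∩ D := ⟨⟨hwu, hwt⟩, hwD⟩
        rw [hIoc] at hmem
        exact absurd hmem (notMem_empty _)
      · exact absurd hle (not_le.2 (EReal.coe_lt_top t))
  obtain ⟨c, htc, hcv⟩ : ∃ c : ℝ, t < c ∧ (c : EReal) ≤ v := by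
    rcases hv1 with ⟨w, -, rfl⟩ | rfl
    · exact ⟨w, EReal.coe_lt_coe_iff.1 htv, le_refl _⟩
    · exact ⟨t + 1, lt_add_one t, le_top⟩
  refine ⟨c, htc, ?_, ?_⟩
  · intro s hts hsc
    refine hderiv s ?_ ?_
    · exact lt_of_le_of_lt (EReal.coe_le_coe_iff.2 hut) (EReal.coe_lt_coe_iff.2 hts)
    · exact lt_of_lt_of_le (EReal.coe_lt_coe_iff.2 hsc) hcv
  · rcases eq_or_lt_of_le hut with rfl | hlt
    · exact htend
    · -- t is interior to the piece; use continuity of F ∘ ψ there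
      have htI : t ∈ {s : ℝ | (u : EReal) < (s : EReal) ∧ (s : EReal) < v} :=
        ⟨EReal.coe_lt_coe_iff.2 hlt, htv⟩
      have hIn : {s : ℝ | (u : EReal) < (s : EReal) ∧ (s : EReal) < v} ∈ 𝓝 t := by
        have hsub : Ioo u c ⊆ {s : ℝ | (u : EReal) < (s : EReal) ∧ (s : EReal) < v} := by
          intro s hs
          exact ⟨EReal.coe_lt_coe_iff.2 hs.1, lt_of_lt_of_le (EReal.coe_lt_coe_iff.2 hs.2) hcv⟩
        exact Filter.mem_of_superset (Ioo_mem_nhds hlt htc) hsub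
      have h1 := hcont t htI
      have h2 : 𝓝[{s : ℝ | (u : EReal) < (s : EReal) ∧ (s : EReal) < v}] t = 𝓝 t :=
        nhdsWithin_eq_nhds.2 hIn
      exact (h1.mono_left (by rw [h2]; exact nhdsWithin_le_nhds))

theorem quad {X : ℝ × ℝ} (hXR : X.1 * X.2 ≤ 0) :
    (X.1 ≤ 0 ∧ 0 ≤ X.2) ∨ (0 ≤ X.1 ∧ X.2 ≤ 0) := by
  rcases le_or_gt X.1 0 with h1 | h1 <;> rcases le_or_gt X.2 0 with h2 | h2
  · have hz : X.1 * X.2 = 0 := le_antisymm hXR (by nlinarith)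
    rcases mul_eq_zero.1 hz with h | h
    · exact Or.inr ⟨le_of_eq h.symm, h2⟩
    · exact Or.inl ⟨h1, le_of_eq h.symm⟩
  · exact Or.inl ⟨h1, h2.le⟩
  · exact Or.inr ⟨h1.le, h2⟩
  · nlinarith

theorem quadGH {X : ℝ × ℝ} (hXR : X.1 * X.2 ≤ 0) :
    (C.g0 X ≤ 0 ∧ C.h0 X ≤ 0) ∨ (0 ≤ C.g0 X ∧ 0 ≤ C.h0 X) := by
  rcases quad hXR with ⟨h1, h2⟩ | ⟨h1, h2⟩
  · exact Or.inl ⟨C.P₁.p_nonpos_iff.2 h1, by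
      simp only [h0, neg_nonpos]; exact C.P₂.p_nonneg_iff.2 h2⟩
  · exact Or.inr ⟨C.P₁.p_nonneg_iff.2 h1, by
      simp only [h0, neg_nonneg]; exact C.P₂.p_nonpos_iff.2 h2⟩

theorem Phi_zero (X : ℝ × ℝ) : C.Phi X 0 = X := by
  have hmax : (0:ℝ) - C.tm X ≤ 0 := by linarith [C.tm_nonneg X]
  have h1 : C.u1 X 0 = 0 := by
    show min 0 (C.t1 X) + max (0 - C.tm X) 0 = 0
    rw [min_eq_left (C.t1_nonneg X), max_eq_right hmax]; ring
  have h2 : C.u2 X 0 = 0 := by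
    show min 0 (C.t2 X) + max (0 - C.tm X) 0 = 0
    rw [min_eq_left (C.t2_nonneg X), max_eq_right hmax]; ring
  have : C.Phi X 0 = (C.Gi (C.g0 X), C.Ki (-(C.h0 X))) := by
    simp [Phi, h1, h2]
  rw [this]
  show (C.P₁.q (C.P₁.p X.1), C.P₂.q (-(-(C.P₂.p X.2)))) = X
  rw [neg_neg, C.P₁.qp, C.P₂.qp]

theorem Phi_cont : Continuous (fun p : (ℝ × ℝ) × ℝ => C.Phi p.1 p.2) := by
  have hG := C.cG; have hGi := C.cGi; have hK := C.cK; have hKi := C.cKi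
  unfold Phi u1 u2 tm t1 t2 g0 h0 G Gi K Ki at *
  fun_prop

theorem Phi_mem_R {X : ℝ × ℝ} (hXR : X.1 * X.2 ≤ 0) {t : ℝ} (ht : 0 ≤ t) :
    (C.Phi X t).1 * (C.Phi X t).2 ≤ 0 := by
  have hfst : (C.Phi X t).1 = C.Gi (C.g0 X + C.u1 X t) := rfl
  have hsnd : (C.Phi X t).2 = C.Ki (-(C.h0 X + C.u2 X t)) := rfl
  rw [mul_nonpos_iff]
  rcases C.quadGH hXR with ⟨h1, h2⟩ | ⟨h1, h2⟩
  · have ht1 : C.t1 X = -(C.g0 X) := max_eq_left (by linarith)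
    have ht2 : C.t2 X = -(C.h0 X) := max_eq_left (by linarith)
    rcases le_or_gt t (C.tm X) with htm | htm
    · right
      constructor
      · rw [hfst, C.Gi_nonpos_iff]
        have : min t (C.t1 X) ≤ C.t1 X := min_le_right _ _
        have hmx : max (t - C.tm X) 0 = 0 := max_eq_right (by linarith)
        simp only [u1, hmx, add_zero]
        rw [ht1] at this ⊢
        linarith
      · rw [hsnd, C.Ki_nonneg_iff]
        have : min t (C.t2 X) ≤ C.t2 X := min_le_right _ _
        have hmx : max (t - C.tm X) 0 = 0 := max_eq_right (by linarith)
        simp only [u2, hmx, add_zero]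
        rw [ht2] at this ⊢
        linarith
    · left
      have hu1 : C.u1 X t = C.t1 X + (t - C.tm X) := by
        have : min t (C.t1 X) = C.t1 X := min_eq_right (by linarith [C.t1_le_tm X])
        simp [u1, this, max_eq_left (by linarith : (0:ℝ) ≤ t - C.tm X)]
      have hu2 : C.u2 X t = C.t2 X + (t - C.tm X) := by
        have : min t (C.t2 X) = C.t2 X := min_eq_right (by linarith [C.t2_le_tm X])
        simp [u2, this, max_eq_left (by linarith : (0:ℝ) ≤ t - C.tm X)]
      constructor
      · rw [hfst, C.Gi_nonneg_iff, hu1, ht1]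
        linarith
      · rw [hsnd, C.Ki_nonpos_iff, hu2, ht2]
        linarith
  · have ht1 : C.t1 X = 0 := max_eq_right (by linarith)
    have ht2 : C.t2 X = 0 := max_eq_right (by linarith)
    have htm : C.tm X = 0 := by rw [tm, ht1, ht2]; simp
    have hu1 : C.u1 X t = t := by simp [u1, ht1, htm, min_eq_right ht, max_eq_left ht]
    have hu2 : C.u2 X t = t := by simp [u2, ht2, htm, min_eq_right ht, max_eq_left ht]
    left
    constructor
    · rw [hfst, C.Gi_nonneg_iff, hu1]; linarith
    · rw [hsnd, C.Ki_nonpos_iff, hu2]; linarith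

noncomputable def ts (X : ℝ × ℝ) : ℝ := min (C.t1 X) (C.t2 X)

theorem ts_nonneg (X : ℝ × ℝ) : 0 ≤ C.ts X := le_min (C.t1_nonneg X) (C.t2_nonneg X)
theorem ts_le_tm (X : ℝ × ℝ) : C.ts X ≤ C.tm X :=
  le_trans (min_le_left _ _) (C.t1_le_tm X)
theorem ts_le_t1 (X : ℝ × ℝ) : C.ts X ≤ C.t1 X := min_le_left _ _
theorem ts_le_t2 (X : ℝ × ℝ) : C.ts X ≤ C.t2 X := min_le_right _ _

theorem add_max_neg (x : ℝ) : x + max (-x) 0 = max x 0 := by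
  rcases le_total x 0 with h | h
  · rw [max_eq_left (by linarith : (0:ℝ) ≤ -x), max_eq_right h]; ring
  · rw [max_eq_right (by linarith : -x ≤ (0:ℝ)), max_eq_left h]; ring

theorem g0t1 (X : ℝ × ℝ) : C.g0 X + C.t1 X = max (C.g0 X) 0 := add_max_neg _
theorem h0t2 (X : ℝ × ℝ) : C.h0 X + C.t2 X = max (C.h0 X) 0 := add_max_neg _

theorem u1_eval {X : ℝ × ℝ} {t : ℝ} (h1 : t ≤ C.t1 X) (h2 : t ≤ C.tm X) : C.u1 X t = t := by
  show min t (C.t1 X) + max (t - C.tm X) 0 = t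
  rw [min_eq_left h1, max_eq_right (by linarith)]; ring

theorem u2_eval {X : ℝ × ℝ} {t : ℝ} (h1 : t ≤ C.t2 X) (h2 : t ≤ C.tm X) : C.u2 X t = t := by
  show min t (C.t2 X) + max (t - C.tm X) 0 = t
  rw [min_eq_left h1, max_eq_right (by linarith)]; ring

theorem u1_eval' {X : ℝ × ℝ} {t : ℝ} (h1 : C.t1 X ≤ t) (h2 : t ≤ C.tm X) :
    C.u1 X t = C.t1 X := by
  show min t (C.t1 X) + max (t - C.tm X) 0 = C.t1 X
  rw [min_eq_right h1, max_eq_right (by linarith)]; ring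

theorem u2_eval' {X : ℝ × ℝ} {t : ℝ} (h1 : C.t2 X ≤ t) (h2 : t ≤ C.tm X) :
    C.u2 X t = C.t2 X := by
  show min t (C.t2 X) + max (t - C.tm X) 0 = C.t2 X
  rw [min_eq_right h1, max_eq_right (by linarith)]; ring

theorem u1_eval'' {X : ℝ × ℝ} {t : ℝ} (h2 : C.tm X ≤ t) :
    C.u1 X t = C.t1 X + (t - C.tm X) := by
  show min t (C.t1 X) + max (t - C.tm X) 0 = C.t1 X + (t - C.tm X)
  rw [min_eq_right (le_trans (C.t1_le_tm X) h2), max_eq_left (by linarith)]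

theorem u2_eval'' {X : ℝ × ℝ} {t : ℝ} (h2 : C.tm X ≤ t) :
    C.u2 X t = C.t2 X + (t - C.tm X) := by
  show min t (C.t2 X) + max (t - C.tm X) 0 = C.t2 X + (t - C.tm X)
  rw [min_eq_right (le_trans (C.t2_le_tm X) h2), max_eq_left (by linarith)]

theorem Phi_def (X : ℝ × ℝ) (t : ℝ) :
    C.Phi X t = (C.Gi (C.g0 X + C.u1 X t), C.Ki (-(C.h0 X + C.u2 X t))) := rfl

theorem Phi_cont_one (X : ℝ × ℝ) : Continuous (C.Phi X) :=
  C.Phi_cont.comp (continuous_const.prodMk continuous_id)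

/-- Region after the meeting time `tm`. -/
theorem reg3 (X : ℝ × ℝ) (hXR : X.1 * X.2 ≤ 0) :
    (∀ s, C.tm X < s → HasDerivAt (C.Phi X) (C.F (C.Phi X s)) s) ∧
    ContinuousOn (fun s => C.F (C.Phi X s)) (Ioi (C.tm X)) ∧
    Tendsto (fun s => C.F (C.Phi X s)) (𝓝[>] (C.tm X)) (𝓝 (C.F (C.Phi X (C.tm X)))) := by
  set τ := C.tm X with hτ
  set cg := max (C.g0 X) 0 with hcg
  set ch := max (C.h0 X) 0 with hch
  set E : ℝ → ℝ × ℝ := fun s => (C.Gi (cg + (s - τ)), C.Ki (-(ch + (s - τ)))) with hEdef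
  have hEeq : ∀ s, τ ≤ s → C.Phi X s = E s := by
    intro s hs
    rw [C.Phi_def, C.u1_eval'' hs, C.u2_eval'' hs, ← add_assoc, ← add_assoc,
      C.g0t1, C.h0t2]
  have hsg : ∀ s, τ ≤ s → 0 ≤ (C.Phi X s).1 ∧ (C.Phi X s).2 ≤ 0 := by
    intro s hs
    rw [hEeq s hs]
    constructor
    · exact C.Gi_nonneg_iff.2 (add_nonneg (le_max_right _ _) (by linarith))
    · exact C.Ki_nonpos_iff.2 (by
        have : (0:ℝ) ≤ ch + (s - τ) := add_nonneg (le_max_right _ _) (by linarith)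
        linarith)
  have hF : ∀ s, τ ≤ s → C.F (C.Phi X s) = (C.V₁ (C.Phi X s).1, C.V₂ (C.Phi X s).2) := by
    intro s hs
    apply C.F_eq3
    · rintro ⟨-, h⟩; exact absurd h (not_lt.2 (hsg s hs).2)
    · rintro ⟨-, h⟩; exact absurd h (not_lt.2 (hsg s hs).1)
  have hEd : ∀ s : ℝ, HasDerivAt E (C.V₁ ((E s).1), C.V₂ ((E s).2)) s := by
    intro s
    apply HasDerivAt.prodMk
    · have hin : HasDerivAt (fun r : ℝ => cg + (r - τ)) 1 s := by
        simpa using ((hasDerivAt_id s).sub_const τ).const_add cg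
      have h := (C.hGi (cg + (s - τ))).comp s hin
      simpa [hEdef, Function.comp_def] using h
    · have hin : HasDerivAt (fun r : ℝ => -(ch + (r - τ))) (-1) s := by
        exact (((hasDerivAt_id s).sub_const τ).const_add ch).neg
      have h := (C.hKi (-(ch + (s - τ)))).comp s hin
      simpa [hEdef, Function.comp_def] using h
  have hfull : Continuous (fun s => (C.V₁ (C.Phi X s).1, C.V₂ (C.Phi X s).2)) := by
    have h1 := C.Phi_cont_one X
    exact ((C.hV₁c.comp (continuous_fst.comp h1)).prodMk
      (C.hV₂c.comp (continuous_snd.comp h1)))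
  refine ⟨?_, ?_, ?_⟩
  · intro s hs
    have hev : C.Phi X =ᶠ[𝓝 s] E := by
      filter_upwards [Ioi_mem_nhds hs] with r hr
      exact hEeq r (le_of_lt hr)
    have h := (hEd s).congr_of_eventuallyEq hev
    rw [← hEeq s hs.le] at h
    rwa [hF s hs.le]
  · apply ContinuousOn.congr hfull.continuousOn
    intro s hs
    exact hF s (le_of_lt hs)
  · have h1 : Tendsto (fun s => (C.V₁ (C.Phi X s).1, C.V₂ (C.Phi X s).2)) (𝓝[>] τ)
        (𝓝 (C.V₁ (C.Phi X τ).1, C.V₂ (C.Phi X τ).2)) :=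
      (hfull.tendsto τ).mono_left nhdsWithin_le_nhds
    rw [hF τ le_rfl]
    apply h1.congr'
    filter_upwards [self_mem_nhdsWithin] with s hs
    exact (hF s (le_of_lt hs)).symm

/-- Region before the first hitting time, when it is positive. -/
theorem reg1 (X : ℝ × ℝ) (hts : 0 < C.ts X) :
    (∀ s ∈ Ioo 0 (C.ts X), HasDerivAt (C.Phi X) (C.F (C.Phi X s)) s) ∧
    ContinuousOn (fun s => C.F (C.Phi X s)) (Ioo 0 (C.ts X)) ∧
    Tendsto (fun s => C.F (C.Phi X s)) (𝓝[>] 0) (𝓝 (C.F (C.Phi X 0))) := by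
  have ht1p : 0 < C.t1 X := lt_of_lt_of_le hts (C.ts_le_t1 X)
  have ht2p : 0 < C.t2 X := lt_of_lt_of_le hts (C.ts_le_t2 X)
  have hg0 : C.g0 X < 0 := by
    by_contra h
    push_neg at h
    have : C.t1 X = 0 := max_eq_right (by linarith)
    linarith
  have hh0 : C.h0 X < 0 := by
    by_contra h
    push_neg at h
    have : C.t2 X = 0 := max_eq_right (by linarith)
    linarith
  have ht1 : C.t1 X = -(C.g0 X) := max_eq_left (by linarith)
  have ht2 : C.t2 X = -(C.h0 X) := max_eq_left (by linarith)
  set E : ℝ → ℝ × ℝ := fun s => (C.Gi (C.g0 X + s), C.Ki (-(C.h0 X + s))) with hEdef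
  have hEeq : ∀ s, 0 ≤ s → s ≤ C.ts X → C.Phi X s = E s := by
    intro s h0s hs
    rw [C.Phi_def, C.u1_eval (le_trans hs (C.ts_le_t1 X)) (le_trans hs (C.ts_le_tm X)),
      C.u2_eval (le_trans hs (C.ts_le_t2 X)) (le_trans hs (C.ts_le_tm X))]
  have hsg : ∀ s ∈ Ioo 0 (C.ts X), (C.Phi X s).1 < 0 ∧ 0 < (C.Phi X s).2 := by
    intro s hs
    rw [hEeq s hs.1.le hs.2.le]
    have h1 : C.g0 X + s < 0 := by
      have := lt_of_lt_of_le hs.2 (C.ts_le_t1 X)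
      rw [ht1] at this; linarith
    have h2 : C.h0 X + s < 0 := by
      have := lt_of_lt_of_le hs.2 (C.ts_le_t2 X)
      rw [ht2] at this; linarith
    exact ⟨C.Gi_neg_iff.2 h1, C.Ki_pos_iff.2 (by linarith)⟩
  have hF : ∀ s ∈ Ioo 0 (C.ts X),
      C.F (C.Phi X s) = (C.V₁ (C.Phi X s).1, C.V₂ (C.Phi X s).2) := by
    intro s hs
    apply C.F_eq3
    · rintro ⟨h, -⟩; exact absurd h (ne_of_lt (hsg s hs).1)
    · rintro ⟨h, -⟩; exact absurd h (ne_of_gt (hsg s hs).2)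
  have hF0 : C.F (C.Phi X 0) = (C.V₁ (C.Phi X 0).1, C.V₂ (C.Phi X 0).2) := by
    apply C.F_eq3
    · rintro ⟨h, -⟩
      rw [C.Phi_zero] at h
      have : X.1 < 0 := C.G_neg_iff.1 hg0
      exact absurd h this.ne
    · rintro ⟨h, -⟩
      rw [C.Phi_zero] at h
      have : 0 < C.K X.2 := by simpa [h0] using hh0
      have : (0:ℝ) < X.2 := C.K_pos_iff.1 this
      exact absurd h this.ne'
  have hEd : ∀ s : ℝ, HasDerivAt E (C.V₁ ((E s).1), C.V₂ ((E s).2)) s := by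
    intro s
    apply HasDerivAt.prodMk
    · have hin : HasDerivAt (fun r : ℝ => C.g0 X + r) 1 s := by
        simpa using (hasDerivAt_id s).const_add (C.g0 X)
      have h := (C.hGi (C.g0 X + s)).comp s hin
      simpa [hEdef, Function.comp_def] using h
    · have hin : HasDerivAt (fun r : ℝ => -(C.h0 X + r)) (-1) s := by
        exact ((hasDerivAt_id s).const_add (C.h0 X)).neg
      have h := (C.hKi (-(C.h0 X + s))).comp s hin
      simpa [hEdef, Function.comp_def] using h
  have hfull : Continuous (fun s => (C.V₁ (C.Phi X s).1, C.V₂ (C.Phi X s).2)) := by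
    have h1 := C.Phi_cont_one X
    exact ((C.hV₁c.comp (continuous_fst.comp h1)).prodMk
      (C.hV₂c.comp (continuous_snd.comp h1)))
  refine ⟨?_, ?_, ?_⟩
  · intro s hs
    have hev : C.Phi X =ᶠ[𝓝 s] E := by
      filter_upwards [Ioo_mem_nhds hs.1 hs.2] with r hr
      exact hEeq r hr.1.le hr.2.le
    have h := (hEd s).congr_of_eventuallyEq hev
    rw [← hEeq s hs.1.le hs.2.le] at h
    rwa [hF s hs]
  · exact ContinuousOn.congr hfull.continuousOn hF
  · have h1 : Tendsto (fun s => (C.V₁ (C.Phi X s).1, C.V₂ (C.Phi X s).2)) (𝓝[>] 0)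
        (𝓝 (C.V₁ (C.Phi X 0).1, C.V₂ (C.Phi X 0).2)) :=
      (hfull.tendsto 0).mono_left nhdsWithin_le_nhds
    rw [hF0]
    apply h1.congr'
    filter_upwards [Ioo_mem_nhdsGT_of_mem (left_mem_Ico.2 hts)] with s hs
    exact (hF s hs).symm

/-- Region where train 1 waits at the loop: `t1 < s < t2`. -/
theorem reg2a (X : ℝ × ℝ) (hXR : X.1 * X.2 ≤ 0) (hlt : C.t1 X < C.t2 X) :
    (∀ s ∈ Ioo (C.t1 X) (C.t2 X), HasDerivAt (C.Phi X) (C.F (C.Phi X s)) s) ∧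
    ContinuousOn (fun s => C.F (C.Phi X s)) (Ioo (C.t1 X) (C.t2 X)) ∧
    Tendsto (fun s => C.F (C.Phi X s)) (𝓝[>] (C.t1 X)) (𝓝 (C.F (C.Phi X (C.t1 X)))) := by
  have htm : C.tm X = C.t2 X := max_eq_right hlt.le
  have ht2p : 0 < C.t2 X := lt_of_le_of_lt (C.t1_nonneg X) hlt
  have hh0 : C.h0 X < 0 := by
    by_contra h
    push_neg at h
    have : C.t2 X = 0 := max_eq_right (by linarith)
    linarith
  have ht2 : C.t2 X = -(C.h0 X) := max_eq_left (by linarith)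
  have hb : 0 < X.2 := C.K_pos_iff.1 (by simpa [h0] using hh0)
  have hg0 : C.g0 X ≤ 0 := by
    rcases C.quadGH hXR with ⟨h, -⟩ | ⟨-, h⟩
    · exact h
    · exact le_of_lt (by exfalso; rw [h0] at hh0; linarith [C.K_nonneg_iff.2 (le_of_lt hb)]) -- fix below
  have hg0t1 : C.g0 X + C.t1 X = 0 := by
    rw [C.g0t1, max_eq_right hg0]
  set E : ℝ → ℝ × ℝ := fun s => ((0:ℝ), C.Ki (-(C.h0 X + s))) with hEdef
  have hEeq : ∀ s, C.t1 X ≤ s → s ≤ C.t2 X → C.Phi X s = E s := by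
    intro s h1s hs
    rw [C.Phi_def, C.u1_eval' h1s (htm ▸ hs), C.u2_eval (by linarith) (htm ▸ hs)]
    rw [hg0t1, C.Gi_zero]
  have hsg : ∀ s, C.t1 X ≤ s → s < C.t2 X → 0 < (C.Phi X s).2 := by
    intro s h1s hs
    rw [hEeq s h1s hs.le]
    have : C.h0 X + s < 0 := by rw [ht2] at hs; linarith
    exact C.Ki_pos_iff.2 (by linarith)
  have hfst : ∀ s, C.t1 X ≤ s → s ≤ C.t2 X → (C.Phi X s).1 = 0 := by
    intro s h1s hs
    rw [hEeq s h1s hs]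
  have hF : ∀ s, C.t1 X ≤ s → s < C.t2 X →
      C.F (C.Phi X s) = (0, C.V₂ (C.Phi X s).2) := by
    intro s h1s hs
    exact C.F_eq1 _ ⟨hfst s h1s hs.le, hsg s h1s hs⟩
  have hEd : ∀ s : ℝ, HasDerivAt E (0, C.V₂ ((E s).2)) s := by
    intro s
    apply HasDerivAt.prodMk
    · exact hasDerivAt_const s 0
    · have hin : HasDerivAt (fun r : ℝ => -(C.h0 X + r)) (-1) s := by
        exact ((hasDerivAt_id s).const_add (C.h0 X)).neg
      have h := (C.hKi (-(C.h0 X + s))).comp s hin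
      simpa [hEdef, Function.comp_def] using h
  have hfull : Continuous (fun s => ((0:ℝ), C.V₂ (C.Phi X s).2)) := by
    have h1 := C.Phi_cont_one X
    exact (continuous_const.prodMk (C.hV₂c.comp (continuous_snd.comp h1)))
  refine ⟨?_, ?_, ?_⟩
  · intro s hs
    have hev : C.Phi X =ᶠ[𝓝 s] E := by
      filter_upwards [Ioo_mem_nhds hs.1 hs.2] with r hr
      exact hEeq r hr.1.le hr.2.le
    have h := (hEd s).congr_of_eventuallyEq hev
    have h2 : (C.Phi X s).2 = (E s).2 := by rw [hEeq s hs.1.le hs.2.le]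
    rw [← h2] at h
    rwa [hF s hs.1.le hs.2]
  · apply ContinuousOn.congr hfull.continuousOn
    intro s hs
    exact hF s hs.1.le hs.2
  · have h1 : Tendsto (fun s => ((0:ℝ), C.V₂ (C.Phi X s).2)) (𝓝[>] (C.t1 X))
        (𝓝 ((0:ℝ), C.V₂ (C.Phi X (C.t1 X)).2)) :=
      (hfull.tendsto _).mono_left nhdsWithin_le_nhds
    rw [hF _ le_rfl hlt]
    apply h1.congr'
    filter_upwards [Ioo_mem_nhdsGT_of_mem (left_mem_Ico.2 hlt)] with s hs
    exact (hF s hs.1.le hs.2).symm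

/-- Region where train 2 waits at the loop: `t2 < s < t1`. -/
theorem reg2b (X : ℝ × ℝ) (hXR : X.1 * X.2 ≤ 0) (hlt : C.t2 X < C.t1 X) :
    (∀ s ∈ Ioo (C.t2 X) (C.t1 X), HasDerivAt (C.Phi X) (C.F (C.Phi X s)) s) ∧
    ContinuousOn (fun s => C.F (C.Phi X s)) (Ioo (C.t2 X) (C.t1 X)) ∧
    Tendsto (fun s => C.F (C.Phi X s)) (𝓝[>] (C.t2 X)) (𝓝 (C.F (C.Phi X (C.t2 X)))) := by
  have htm : C.tm X = C.t1 X := max_eq_left hlt.le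
  have ht1p : 0 < C.t1 X := lt_of_le_of_lt (C.t2_nonneg X) hlt
  have hg0 : C.g0 X < 0 := by
    by_contra h
    push_neg at h
    have : C.t1 X = 0 := max_eq_right (by linarith)
    linarith
  have ht1 : C.t1 X = -(C.g0 X) := max_eq_left (by linarith)
  have ha : X.1 < 0 := C.G_neg_iff.1 hg0
  have hh0 : 0 ≤ -(C.h0 X) := by
    rcases quad hXR with ⟨h1, h2⟩ | ⟨h1, h2⟩
    · simp only [h0, neg_neg]; exact C.K_nonneg_iff.2 h2
    · linarith
  have hh0t2 : C.h0 X + C.t2 X = 0 := by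
    rw [C.h0t2, max_eq_right (by linarith)]
  set E : ℝ → ℝ × ℝ := fun s => (C.Gi (C.g0 X + s), (0:ℝ)) with hEdef
  have hEeq : ∀ s, C.t2 X ≤ s → s ≤ C.t1 X → C.Phi X s = E s := by
    intro s h1s hs
    rw [C.Phi_def, C.u1_eval (by linarith) (htm ▸ hs), C.u2_eval' h1s (htm ▸ hs)]
    rw [hh0t2]
    simp [C.Ki_zero, hEdef]
  have hsg : ∀ s, C.t2 X ≤ s → s < C.t1 X → (C.Phi X s).1 < 0 := by
    intro s h1s hs
    rw [hEeq s h1s hs.le]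
    have : C.g0 X + s < 0 := by rw [ht1] at hs; linarith
    exact C.Gi_neg_iff.2 this
  have hsnd : ∀ s, C.t2 X ≤ s → s ≤ C.t1 X → (C.Phi X s).2 = 0 := by
    intro s h1s hs
    rw [hEeq s h1s hs]
  have hF : ∀ s, C.t2 X ≤ s → s < C.t1 X →
      C.F (C.Phi X s) = (C.V₁ (C.Phi X s).1, 0) := by
    intro s h1s hs
    apply C.F_eq2
    · rintro ⟨h, -⟩; exact absurd h (ne_of_lt (hsg s h1s hs))
    · exact ⟨hsnd s h1s hs.le, hsg s h1s hs⟩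
  have hEd : ∀ s : ℝ, HasDerivAt E (C.V₁ ((E s).1), 0) s := by
    intro s
    apply HasDerivAt.prodMk
    · have hin : HasDerivAt (fun r : ℝ => C.g0 X + r) 1 s := by
        simpa using (hasDerivAt_id s).const_add (C.g0 X)
      have h := (C.hGi (C.g0 X + s)).comp s hin
      simpa [hEdef, Function.comp_def] using h
    · exact hasDerivAt_const s 0
  have hfull : Continuous (fun s => (C.V₁ (C.Phi X s).1, (0:ℝ))) := by
    have h1 := C.Phi_cont_one X
    exact ((C.hV₁c.comp (continuous_fst.comp h1)).prodMk continuous_const)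
  refine ⟨?_, ?_, ?_⟩
  · intro s hs
    have hev : C.Phi X =ᶠ[𝓝 s] E := by
      filter_upwards [Ioo_mem_nhds hs.1 hs.2] with r hr
      exact hEeq r hr.1.le hr.2.le
    have h := (hEd s).congr_of_eventuallyEq hev
    have h2 : (C.Phi X s).1 = (E s).1 := by rw [hEeq s hs.1.le hs.2.le]
    rw [← h2] at h
    rwa [hF s hs.1.le hs.2]
  · apply ContinuousOn.congr hfull.continuousOn
    intro s hs
    exact hF s hs.1.le hs.2
  · have h1 : Tendsto (fun s => (C.V₁ (C.Phi X s).1, (0:ℝ))) (𝓝[>] (C.t2 X))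
        (𝓝 (C.V₁ (C.Phi X (C.t2 X)).1, (0:ℝ))) :=
      (hfull.tendsto _).mono_left nhdsWithin_le_nhds
    rw [hF _ le_rfl hlt]
    apply h1.congr'
    filter_upwards [Ioo_mem_nhdsGT_of_mem (left_mem_Ico.2 hlt)] with s hs
    exact (hF s hs.1.le hs.2).symm

theorem coeSet_top (u : ℝ) :
    {t : ℝ | (u : EReal) < (t : EReal) ∧ (t : EReal) < (⊤ : EReal)} = Ioi u := by
  ext t; simp [EReal.coe_lt_coe_iff, EReal.coe_lt_top]

theorem coeSet_coe (u w : ℝ) :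
    {t : ℝ | (u : EReal) < (t : EReal) ∧ (t : EReal) < ((w : ℝ) : EReal)} = Ioo u w := by
  ext t; simp [EReal.coe_lt_coe_iff]

theorem Phi_curve (X : ℝ × ℝ) (hXR : X.1 * X.2 ≤ 0) :
    IsNetIntegralCurve C.F X ⊤ (C.Phi X) := by
  have hσ0 : 0 ≤ C.ts X := C.ts_nonneg X
  have hστ : C.ts X ≤ C.tm X := C.ts_le_tm X
  set σ := C.ts X with hσdef
  set τ := C.tm X with hτdef
  set D : Set ℝ := {0, σ, τ} with hD
  have hmem : ∀ x, x ∈ D ↔ x = 0 ∨ x = σ ∨ x = τ := by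
    intro x; simp [hD]
  have hDfin : D.Finite := by
    rw [hD]; exact ((finite_singleton τ).insert σ).insert 0
  -- node at τ : interval (τ, ∞)
  have node_tm : ∃ v : EReal, ((∃ w ∈ D, (w : EReal) = v) ∨ v = ⊤) ∧ (τ : EReal) < v ∧
      (∀ w ∈ D, (τ : EReal) < (w : EReal) → v ≤ (w : EReal)) ∧
      (∀ t : ℝ, (τ : EReal) < (t : EReal) → (t : EReal) < v →
        HasDerivAt (C.Phi X) (C.F (C.Phi X t)) t) ∧
      ContinuousOn (fun t => C.F (C.Phi X t))
        {t : ℝ | (τ : EReal) < (t : EReal) ∧ (t : EReal) < v} ∧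
      Tendsto (fun t => C.F (C.Phi X t)) (𝓝[>] τ) (𝓝 (C.F (C.Phi X τ))) := by
    obtain ⟨hd, hc, ht⟩ := C.reg3 X hXR
    refine ⟨⊤, Or.inr rfl, EReal.coe_lt_top _, ?_, ?_, ?_, ht⟩
    · intro w hw hlt
      exfalso
      have hwτ : τ < w := EReal.coe_lt_coe_iff.1 hlt
      rcases (hmem w).1 hw with rfl | rfl | rfl
      · linarith [C.tm_nonneg X]
      · linarith
      · exact lt_irrefl _ hwτ
    · intro t h1 _
      exact hd t (EReal.coe_lt_coe_iff.1 h1)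
    · rw [coeSet_top]; exact hc
  -- node at σ when σ < τ : interval (σ, τ)
  have node_ts : σ < τ → ((∃ v : EReal, ((∃ w ∈ D, (w : EReal) = v) ∨ v = ⊤) ∧
      (σ : EReal) < v ∧
      (∀ w ∈ D, (σ : EReal) < (w : EReal) → v ≤ (w : EReal)) ∧
      (∀ t : ℝ, (σ : EReal) < (t : EReal) → (t : EReal) < v →
        HasDerivAt (C.Phi X) (C.F (C.Phi X t)) t) ∧
      ContinuousOn (fun t => C.F (C.Phi X t))
        {t : ℝ | (σ : EReal) < (t : EReal) ∧ (t : EReal) < v} ∧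
      Tendsto (fun t => C.F (C.Phi X t)) (𝓝[>] σ) (𝓝 (C.F (C.Phi X σ))))) := by
    intro hlt
    have hd : (∀ s ∈ Ioo σ τ, HasDerivAt (C.Phi X) (C.F (C.Phi X s)) s) ∧
        ContinuousOn (fun s => C.F (C.Phi X s)) (Ioo σ τ) ∧
        Tendsto (fun s => C.F (C.Phi X s)) (𝓝[>] σ) (𝓝 (C.F (C.Phi X σ))) := by
      rcases lt_trichotomy (C.t1 X) (C.t2 X) with h12 | h12 | h12
      · have e1 : σ = C.t1 X := min_eq_left h12.le
        have e2 : τ = C.t2 X := max_eq_right h12.le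
        rw [e1, e2]
        exact C.reg2a X hXR h12
      · exfalso
        rw [hσdef, hτdef, ts, tm, h12] at hlt
        simp at hlt
      · have e1 : σ = C.t2 X := min_eq_right h12.le
        have e2 : τ = C.t1 X := max_eq_left h12.le
        rw [e1, e2]
        exact C.reg2b X hXR h12
    obtain ⟨hd, hc, ht⟩ := hd
    refine ⟨(τ : EReal), Or.inl ⟨τ, (hmem τ).2 (Or.inr (Or.inr rfl)), rfl⟩,
      EReal.coe_lt_coe_iff.2 hlt, ?_, ?_, ?_, ht⟩
    · intro w hw hlt2
      have hσw : σ < w := EReal.coe_lt_coe_iff.1 hlt2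
      rcases (hmem w).1 hw with rfl | rfl | rfl
      · exact absurd hσw (by linarith)
      · exact absurd hσw (lt_irrefl _)
      · exact le_rfl
    · intro t h1 h2
      exact hd t ⟨EReal.coe_lt_coe_iff.1 h1, EReal.coe_lt_coe_iff.1 h2⟩
    · rw [coeSet_coe]; exact hc
  -- node at 0 when 0 < σ : interval (0, σ)
  have node_0 : 0 < σ → ((∃ v : EReal, ((∃ w ∈ D, (w : EReal) = v) ∨ v = ⊤) ∧
      ((0:ℝ) : EReal) < v ∧
      (∀ w ∈ D, ((0:ℝ) : EReal) < (w : EReal) → v ≤ (w : EReal)) ∧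
      (∀ t : ℝ, ((0:ℝ) : EReal) < (t : EReal) → (t : EReal) < v →
        HasDerivAt (C.Phi X) (C.F (C.Phi X t)) t) ∧
      ContinuousOn (fun t => C.F (C.Phi X t))
        {t : ℝ | ((0:ℝ) : EReal) < (t : EReal) ∧ (t : EReal) < v} ∧
      Tendsto (fun t => C.F (C.Phi X t)) (𝓝[>] (0:ℝ)) (𝓝 (C.F (C.Phi X 0))))) := by
    intro hlt
    obtain ⟨hd, hc, ht⟩ := C.reg1 X hlt
    refine ⟨(σ : EReal), Or.inl ⟨σ, (hmem σ).2 (Or.inr (Or.inl rfl)), rfl⟩,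
      EReal.coe_lt_coe_iff.2 hlt, ?_, ?_, ?_, ht⟩
    · intro w hw hlt2
      have h0w : 0 < w := EReal.coe_lt_coe_iff.1 hlt2
      rcases (hmem w).1 hw with rfl | rfl | rfl
      · exact absurd h0w (lt_irrefl _)
      · exact le_rfl
      · exact EReal.coe_le_coe_iff.2 hστ
    · intro t h1 h2
      exact hd t ⟨EReal.coe_lt_coe_iff.1 h1, EReal.coe_lt_coe_iff.1 h2⟩
    · rw [coeSet_coe]; exact hc
  refine ⟨EReal.zero_lt_top, C.Phi_zero X, (C.Phi_cont_one X).continuousOn, D,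
    hDfin.countable, (hmem 0).2 (Or.inl rfl), ?_, ?_, ?_, ?_⟩
  · intro x hx
    rw [eDom_top]
    rcases (hmem x).1 hx with rfl | rfl | rfl
    · exact mem_Ici.2 le_rfl
    · exact mem_Ici.2 hσ0
    · exact mem_Ici.2 (le_trans hσ0 hστ)
  · rw [hDfin.isClosed.closure_eq]
    exact inter_subset_left
  · intro u hu
    rcases (hmem u).1 hu with rfl | rfl | rfl
    · rcases eq_or_lt_of_le hσ0 with heq | hσp
      · rcases eq_or_lt_of_le hστ with heq2 | hστp
        · rw [heq, heq2]
          exact node_tm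
        · rw [heq]
          exact node_ts hστp
      · exact node_0 hσp
    · rcases eq_or_lt_of_le hστ with heq2 | hστp
      · rw [heq2]
        exact node_tm
      · exact node_ts hστp
    · exact node_tm
  · intro t htd
    rw [eDom_top] at htd
    rcases lt_or_ge t σ with h1 | h1
    · refine ⟨0, (hmem 0).2 (Or.inl rfl), htd, ?_⟩
      ext x
      simp only [mem_inter_iff, mem_Ioc, mem_empty_iff_false, iff_false, not_and]
      intro hx hxD
      rcases (hmem x).1 hxD with rfl | rfl | rfl
      · exact absurd hx.1 (lt_irrefl _)
      · linarith [hx.2]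
      · linarith [hx.2]
    · rcases lt_or_ge t τ with h2 | h2
      · refine ⟨σ, (hmem σ).2 (Or.inr (Or.inl rfl)), h1, ?_⟩
        ext x
        simp only [mem_inter_iff, mem_Ioc, mem_empty_iff_false, iff_false, not_and]
        intro hx hxD
        rcases (hmem x).1 hxD with rfl | rfl | rfl
        · linarith [hx.1]
        · exact absurd hx.1 (lt_irrefl _)
        · linarith [hx.2]
      · refine ⟨τ, (hmem τ).2 (Or.inr (Or.inr rfl)), h2, ?_⟩
        ext x
        simp only [mem_inter_iff, mem_Ioc, mem_empty_iff_false, iff_false, not_and]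
        intro hx hxD
        rcases (hmem x).1 hxD with rfl | rfl | rfl
        · linarith [hx.1]
        · linarith [hx.1]
        · exact absurd hx.1 (lt_irrefl _)

/-- Positive invariance of `R` for arbitrary integral curves. -/
theorem invariance {ψ : ℝ → ℝ × ℝ} {X : ℝ × ℝ} (hXR : X.1 * X.2 ≤ 0)
    (hψ : IsNetIntegralCurve C.F X ⊤ ψ) :
    ∀ t, 0 ≤ t → (ψ t).1 * (ψ t).2 ≤ 0 := by
  have hψc : ContinuousOn ψ (Ici 0) := by
    have := hψ.2.2.1; rwa [eDom_top] at this
  have hψ0 : ψ 0 = X := hψ.2.1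
  by_contra hcon
  push_neg at hcon
  obtain ⟨s₀, hs₀0, hbad⟩ := hcon
  set B := {s | s ∈ Icc 0 s₀ ∧ (ψ s).1 * (ψ s).2 ≤ 0} with hBdef
  have hBne : B.Nonempty := ⟨0, ⟨le_rfl, hs₀0⟩, by rw [hψ0]; exact hXR⟩
  have hBbdd : BddAbove B := ⟨s₀, fun x hx => hx.1.2⟩
  have hBc : IsClosed B := by
    have h1 : ContinuousOn (fun s => (ψ s).1 * (ψ s).2) (Icc 0 s₀) := by
      have hm : ContinuousOn ψ (Icc 0 s₀) := hψc.mono (fun x hx => hx.1)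
      exact (continuous_fst.comp_continuousOn hm).mul (continuous_snd.comp_continuousOn hm)
    have h2 : IsClosed (Icc 0 s₀ ∩ (fun s => (ψ s).1 * (ψ s).2) ⁻¹' (Iic (0:ℝ))) :=
      h1.preimage_isClosed_of_isClosed isClosed_Icc isClosed_Iic
    have h3 : B = Icc 0 s₀ ∩ (fun s => (ψ s).1 * (ψ s).2) ⁻¹' (Iic (0:ℝ)) := by
      ext x
      simp only [hBdef, mem_setOf_eq, mem_inter_iff, mem_preimage, mem_Iic]
    rw [h3]
    exact h2
  set A := sSup B with hAdef
  have hAB : A ∈ B := hBc.csSup_mem hBne hBbdd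
  have hA0 : 0 ≤ A := hAB.1.1
  have hAs₀ : A ≤ s₀ := hAB.1.2
  have hAR : (ψ A).1 * (ψ A).2 ≤ 0 := hAB.2
  have hAlt : A < s₀ := by
    rcases eq_or_lt_of_le hAs₀ with heq | h
    · rw [heq] at hAR
      exact absurd hAR (not_le.2 hbad)
    · exact h
  have hnotB : ∀ s, A < s → s ≤ s₀ → 0 < (ψ s).1 * (ψ s).2 := by
    intro s hs1 hs2
    by_contra h
    push_neg at h
    have : s ∈ B := ⟨⟨le_trans hA0 hs1.le, hs2⟩, h⟩
    exact absurd (le_csSup hBbdd this) (not_le.2 hs1)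
  obtain ⟨c, hAc, hder, htend⟩ := C.piece hψ hA0
  set c' := min c s₀ with hc'def
  have hAc' : A < c' := lt_min hAc hAlt
  have hprod : ∀ s, A < s → s ≤ c' → 0 < (ψ s).1 * (ψ s).2 := by
    intro s h1 h2
    exact hnotB s h1 (le_trans h2 (min_le_right _ _))
  have hψcc : ContinuousOn ψ (Icc A c') := hψc.mono (fun x hx => le_trans hA0 hx.1)
  have hT : Tendsto ψ (𝓝[>] A) (𝓝 (ψ A)) := by
    have h1 : ContinuousWithinAt ψ (Ici 0) A := hψc A hA0
    exact h1.mono_left (nhdsWithin_mono _ (fun x hx => le_trans hA0 (le_of_lt hx)))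
  have hT1 : Tendsto (fun s => (ψ s).1) (𝓝[>] A) (𝓝 (ψ A).1) :=
    (continuous_fst.tendsto _).comp hT
  have hT2 : Tendsto (fun s => (ψ s).2) (𝓝[>] A) (𝓝 (ψ A).2) :=
    (continuous_snd.tendsto _).comp hT
  have hIoc : Ioc A c' ∈ 𝓝[>] A := Ioc_mem_nhdsGT_of_mem (left_mem_Ico.2 hAc')
  -- ψ₁ is nonzero on (A, c']; its sign is constant, determined at c'
  have hne1 : ∀ s, A < s → s ≤ c' → (ψ s).1 ≠ 0 := by
    intro s h1 h2 h
    have := hprod s h1 h2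
    rw [h] at this; simp at this
  rcases lt_or_gt_of_ne (hne1 c' hAc' le_rfl) with hneg | hpos
  · -- ψ₁ < 0 on (A, c'], hence ψ₂ < 0 there too
    have hsgn1 : ∀ s, A < s → s ≤ c' → (ψ s).1 < 0 := by
      intro s h1 h2
      rcases lt_or_gt_of_ne (hne1 s h1 h2) with h | h
      · exact h
      · exfalso
        have hsub : Icc s c' ⊆ Icc A c' := Icc_subset_Icc h1.le le_rfl
        have hivt := intermediate_value_Icc' (le_of_lt (lt_of_le_of_ne h2 ?hne))
          ((continuous_fst.comp_continuousOn (hψcc.mono hsub)))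
        case hne =>
          intro he
          rw [he] at h
          exact absurd hneg (not_lt.2 h.le)
        have h0mem : (0:ℝ) ∈ Icc ((ψ c').1) ((ψ s).1) := ⟨hneg.le, h.le⟩
        obtain ⟨r, hr, hr0⟩ := hivt h0mem
        exact absurd hr0 (hne1 r (lt_of_lt_of_le h1 hr.1) hr.2)
    have hsgn2 : ∀ s, A < s → s ≤ c' → (ψ s).2 < 0 := by
      intro s h1 h2
      by_contra h
      push_neg at h
      have := hprod s h1 h2
      nlinarith [hsgn1 s h1 h2]
    have hψ1A : (ψ A).1 ≤ 0 :=
      le_of_tendsto hT1 (by filter_upwards [hIoc] with s hs; exact (hsgn1 s hs.1 hs.2).le)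
    have hψ2A : (ψ A).2 ≤ 0 :=
      le_of_tendsto hT2 (by filter_upwards [hIoc] with s hs; exact (hsgn2 s hs.1 hs.2).le)
    have hzero : (ψ A).1 = 0 ∨ (ψ A).2 = 0 := by
      have : 0 ≤ (ψ A).1 * (ψ A).2 := by nlinarith
      have heq : (ψ A).1 * (ψ A).2 = 0 := le_antisymm hAR this
      exact mul_eq_zero.1 heq
    rcases hzero with h1A | h2A
    · -- ψ₁ A = 0 but ψ₁ decreases into negative: contradiction with g-slope
      have hslope := C.gc_slope hAc' hψcc
        (fun s hs => hder s hs.1 (lt_of_lt_of_le hs.2 (min_le_left _ _)))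
        (fun s hs => by
          rintro ⟨h, -⟩
          exact absurd h (hne1 s hs.1 hs.2.le))
      rw [h1A, C.G_zero] at hslope
      have : 0 < C.G (ψ c').1 := by rw [hslope]; linarith
      have := C.G_pos_iff.1 this
      linarith [hsgn1 c' hAc' le_rfl]
    · -- ψ₂ A = 0 : right limit of second component of F ∘ ψ is V₂ 0 ≠ 0
      have hψ1A' : (ψ A).1 < 0 := by
        rcases eq_or_lt_of_le hψ1A with h | h
        · exfalso
          -- both coordinates of ψ A vanish; use g-slope as above
          have hslope := C.gc_slope hAc' hψcc
            (fun s hs => hder s hs.1 (lt_of_lt_of_le hs.2 (min_le_left _ _)))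
            (fun s hs => by
              rintro ⟨hh, -⟩
              exact absurd hh (hne1 s hs.1 hs.2.le))
          rw [h, C.G_zero] at hslope
          have : 0 < C.G (ψ c').1 := by rw [hslope]; linarith
          have := C.G_pos_iff.1 this
          linarith [hsgn1 c' hAc' le_rfl]
        · exact h
      have hFA : C.F (ψ A) = (C.V₁ (ψ A).1, 0) := C.F_eq2 _
        (by rintro ⟨-, hh⟩; exact absurd hh (by rw [h2A]; exact lt_irrefl 0)) ⟨h2A, hψ1A'⟩
      have hlim1 : Tendsto (fun s => (C.F (ψ s)).2) (𝓝[>] A) (𝓝 0) := by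
        have := (continuous_snd.tendsto _).comp htend
        rw [hFA] at this
        exact this
      have hlim2 : Tendsto (fun s => (C.F (ψ s)).2) (𝓝[>] A) (𝓝 (C.V₂ (ψ A).2)) := by
        have hbase : Tendsto (fun s => C.V₂ (ψ s).2) (𝓝[>] A) (𝓝 (C.V₂ (ψ A).2)) :=
          (C.hV₂c.tendsto _).comp hT2
        apply hbase.congr'
        filter_upwards [hIoc] with s hs
        exact (C.F2_eq (ψ s) (by
          rintro ⟨hh, -⟩
          exact absurd hh (hsgn2 s hs.1 hs.2).ne)).symm
      have := tendsto_nhds_unique hlim1 hlim2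
      rw [h2A] at this
      exact absurd this.symm (C.V₂_neg 0).ne
  · -- ψ₁ > 0 on (A, c'], hence ψ₂ > 0 there too
    have hsgn1 : ∀ s, A < s → s ≤ c' → 0 < (ψ s).1 := by
      intro s h1 h2
      rcases lt_or_gt_of_ne (hne1 s h1 h2) with h | h
      swap
      · exact h
      exfalso
      have hsub : Icc s c' ⊆ Icc A c' := Icc_subset_Icc h1.le le_rfl
      have hivt := intermediate_value_Icc (le_of_lt (lt_of_le_of_ne h2 ?hne))
        ((continuous_fst.comp_continuousOn (hψcc.mono hsub)))
      case hne =>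
        intro he
        rw [he] at h
        exact absurd hpos (not_lt.2 h.le)
      have h0mem : (0:ℝ) ∈ Icc ((ψ s).1) ((ψ c').1) := ⟨h.le, hpos.le⟩
      obtain ⟨r, hr, hr0⟩ := hivt h0mem
      exact absurd hr0 (hne1 r (lt_of_lt_of_le h1 hr.1) hr.2)
    have hsgn2 : ∀ s, A < s → s ≤ c' → 0 < (ψ s).2 := by
      intro s h1 h2
      by_contra h
      push_neg at h
      have := hprod s h1 h2
      nlinarith [hsgn1 s h1 h2]
    have hψ1A : 0 ≤ (ψ A).1 :=
      ge_of_tendsto hT1 (by filter_upwards [hIoc] with s hs; exact (hsgn1 s hs.1 hs.2).le)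
    have hψ2A : 0 ≤ (ψ A).2 :=
      ge_of_tendsto hT2 (by filter_upwards [hIoc] with s hs; exact (hsgn2 s hs.1 hs.2).le)
    have hzero : (ψ A).1 = 0 ∨ (ψ A).2 = 0 := by
      have : 0 ≤ (ψ A).1 * (ψ A).2 := mul_nonneg hψ1A hψ2A
      have heq : (ψ A).1 * (ψ A).2 = 0 := le_antisymm hAR this
      exact mul_eq_zero.1 heq
    rcases hzero with h1A | h2A
    swap
    · -- ψ₂ A = 0 but ψ₂ increases into positive: contradiction with h-slope
      have hslope := C.hc_slope hAc' hψcc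
        (fun s hs => hder s hs.1 (lt_of_lt_of_le hs.2 (min_le_left _ _)))
        (fun s hs => by
          rintro ⟨hh, -⟩
          exact absurd hh (hsgn2 s hs.1 hs.2.le).ne')
      rw [h2A, C.K_zero] at hslope
      have : C.K (ψ c').2 < 0 := by
        have : -(C.K (ψ c').2) = -0 + (c' - A) := hslope
        linarith [this]
      have := C.K_neg_iff.1 this
      linarith [hsgn2 c' hAc' le_rfl]
    · -- ψ₁ A = 0, ψ₂ A > 0 : right limit of first component of F ∘ ψ is V₁ 0 ≠ 0
      have hψ2A' : 0 < (ψ A).2 := by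
        rcases eq_or_lt_of_le hψ2A with h | h
        · exfalso
          have hslope := C.hc_slope hAc' hψcc
            (fun s hs => hder s hs.1 (lt_of_lt_of_le hs.2 (min_le_left _ _)))
            (fun s hs => by
              rintro ⟨hh, -⟩
              exact absurd hh (hsgn2 s hs.1 hs.2.le).ne')
          rw [← h, C.K_zero] at hslope
          have : C.K (ψ c').2 < 0 := by linarith [hslope]
          have := C.K_neg_iff.1 this
          linarith [hsgn2 c' hAc' le_rfl]
        · exact h
      have hFA : C.F (ψ A) = (0, C.V₂ (ψ A).2) := C.F_eq1 _ ⟨h1A, hψ2A'⟩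
      have hlim1 : Tendsto (fun s => (C.F (ψ s)).1) (𝓝[>] A) (𝓝 0) := by
        have := (continuous_fst.tendsto _).comp htend
        rw [hFA] at this
        exact this
      have hlim2 : Tendsto (fun s => (C.F (ψ s)).1) (𝓝[>] A) (𝓝 (C.V₁ (ψ A).1)) := by
        have hbase : Tendsto (fun s => C.V₁ (ψ s).1) (𝓝[>] A) (𝓝 (C.V₁ (ψ A).1)) :=
          (C.hV₁c.tendsto _).comp hT1
        apply hbase.congr'
        filter_upwards [hIoc] with s hs
        exact (C.F1_eq (ψ s) (by
          rintro ⟨hh, -⟩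
          exact absurd hh (hsgn1 s hs.1 hs.2).ne')).symm
      have := tendsto_nhds_unique hlim1 hlim2
      rw [h1A] at this
      exact absurd this.symm (C.V₁_pos 0).ne'

/-- If the first coordinate is nonnegative at `t`, it cannot become negative while the
derivative property holds. -/
theorem no_neg_excursion {ψ : ℝ → ℝ × ℝ} {t c s₀ : ℝ}
    (hψc : ContinuousOn ψ (Ici 0)) (ht : 0 ≤ t)
    (hder : ∀ s, t < s → s < c → HasDerivAt ψ (C.F (ψ s)) s)
    (h0 : 0 ≤ (ψ t).1) (hs₀ : t ≤ s₀) (hs₀c : s₀ < c) : 0 ≤ (ψ s₀).1 := by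
  by_contra hneg
  push_neg at hneg
  have hts₀ : t < s₀ := by
    rcases eq_or_lt_of_le hs₀ with rfl | hlt
    · exact absurd h0 (not_le.2 hneg)
    · exact hlt
  have hcc : ContinuousOn ψ (Icc t s₀) := hψc.mono (fun r hr => le_trans ht hr.1)
  have hcc1 : ContinuousOn (fun r => (ψ r).1) (Icc t s₀) :=
    continuous_fst.comp_continuousOn hcc
  set Z := {r | r ∈ Icc t s₀ ∧ (ψ r).1 = 0} with hZdef
  have hZne : Z.Nonempty := by
    rcases eq_or_lt_of_le h0 with heq | hpos
    · exact ⟨t, ⟨le_rfl, hs₀⟩, heq.symm⟩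
    · have hivt := intermediate_value_Icc' hs₀ hcc1
      have h0mem : (0:ℝ) ∈ Icc ((ψ s₀).1) ((ψ t).1) := ⟨hneg.le, h0⟩
      obtain ⟨r, hr, hr0⟩ := hivt h0mem
      exact ⟨r, hr, hr0⟩
  have hZc : IsClosed Z := by
    have h2 := hcc1.preimage_isClosed_of_isClosed isClosed_Icc
      (isClosed_singleton (x := (0:ℝ)))
    have h3 : Z = Icc t s₀ ∩ (fun r => (ψ r).1) ⁻¹' {0} := by
      ext r; simp [hZdef]
    rw [h3]; exact h2
  have hZbdd : BddAbove Z := ⟨s₀, fun r hr => hr.1.2⟩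
  set A := sSup Z with hAdef
  have hAZ : A ∈ Z := hZc.csSup_mem hZne hZbdd
  have hA1 : (ψ A).1 = 0 := hAZ.2
  have htA : t ≤ A := hAZ.1.1
  have hAs₀ : A < s₀ := by
    rcases eq_or_lt_of_le hAZ.1.2 with heq | hlt
    · exfalso; rw [heq] at hA1; exact hneg.ne hA1
    · exact hlt
  have hne : ∀ r, A < r → r ≤ s₀ → (ψ r).1 ≠ 0 := by
    intro r h1 h2 hz
    have : r ∈ Z := ⟨⟨le_trans htA h1.le, h2⟩, hz⟩
    exact absurd (le_csSup hZbdd this) (not_le.2 h1)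
  have hsgn : ∀ r, A < r → r ≤ s₀ → (ψ r).1 < 0 := by
    intro r h1 h2
    rcases lt_or_gt_of_ne (hne r h1 h2) with hlt | hgt
    · exact hlt
    · exfalso
      have hivt := intermediate_value_Icc' h2 (hcc1.mono
        (Icc_subset_Icc (le_trans htA h1.le) le_rfl))
      have h0mem : (0:ℝ) ∈ Icc ((ψ s₀).1) ((ψ r).1) := ⟨hneg.le, hgt.le⟩
      obtain ⟨r', hr', hr0⟩ := hivt h0mem
      exact hne r' (lt_of_lt_of_le h1 hr'.1) hr'.2 hr0
  have hslope := C.gc_slope hAs₀ (hcc.mono (Icc_subset_Icc htA le_rfl))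
    (fun s hs => hder s (lt_of_le_of_lt htA hs.1) (lt_trans hs.2 hs₀c))
    (fun s hs => by
      rintro ⟨hz, -⟩
      exact absurd hz (hsgn s hs.1 hs.2.le).ne)
  rw [hA1, C.G_zero] at hslope
  have : 0 < C.G (ψ s₀).1 := by rw [hslope]; linarith
  exact absurd (C.G_pos_iff.1 this) (not_lt.2 hneg.le)

/-- If the second coordinate is nonpositive at `t`, it cannot become positive. -/
theorem no_pos_excursion {ψ : ℝ → ℝ × ℝ} {t c s₀ : ℝ}
    (hψc : ContinuousOn ψ (Ici 0)) (ht : 0 ≤ t)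
    (hder : ∀ s, t < s → s < c → HasDerivAt ψ (C.F (ψ s)) s)
    (h0 : (ψ t).2 ≤ 0) (hs₀ : t ≤ s₀) (hs₀c : s₀ < c) : (ψ s₀).2 ≤ 0 := by
  by_contra hpos
  push_neg at hpos
  have hts₀ : t < s₀ := by
    rcases eq_or_lt_of_le hs₀ with rfl | hlt
    · exact absurd h0 (not_le.2 hpos)
    · exact hlt
  have hcc : ContinuousOn ψ (Icc t s₀) := hψc.mono (fun r hr => le_trans ht hr.1)
  have hcc2 : ContinuousOn (fun r => (ψ r).2) (Icc t s₀) :=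
    continuous_snd.comp_continuousOn hcc
  set Z := {r | r ∈ Icc t s₀ ∧ (ψ r).2 = 0} with hZdef
  have hZne : Z.Nonempty := by
    rcases eq_or_lt_of_le h0 with heq | hneg'
    · exact ⟨t, ⟨le_rfl, hs₀⟩, heq⟩
    · have hivt := intermediate_value_Icc hs₀ hcc2
      have h0mem : (0:ℝ) ∈ Icc ((ψ t).2) ((ψ s₀).2) := ⟨h0, hpos.le⟩
      obtain ⟨r, hr, hr0⟩ := hivt h0mem
      exact ⟨r, hr, hr0⟩
  have hZc : IsClosed Z := by
    have h2 := hcc2.preimage_isClosed_of_isClosed isClosed_Icc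
      (isClosed_singleton (x := (0:ℝ)))
    have h3 : Z = Icc t s₀ ∩ (fun r => (ψ r).2) ⁻¹' {0} := by
      ext r; simp [hZdef]
    rw [h3]; exact h2
  have hZbdd : BddAbove Z := ⟨s₀, fun r hr => hr.1.2⟩
  set A := sSup Z with hAdef
  have hAZ : A ∈ Z := hZc.csSup_mem hZne hZbdd
  have hA2 : (ψ A).2 = 0 := hAZ.2
  have htA : t ≤ A := hAZ.1.1
  have hAs₀ : A < s₀ := by
    rcases eq_or_lt_of_le hAZ.1.2 with heq | hlt
    · exfalso; rw [heq] at hA2; exact hpos.ne' hA2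
    · exact hlt
  have hne : ∀ r, A < r → r ≤ s₀ → (ψ r).2 ≠ 0 := by
    intro r h1 h2 hz
    have : r ∈ Z := ⟨⟨le_trans htA h1.le, h2⟩, hz⟩
    exact absurd (le_csSup hZbdd this) (not_le.2 h1)
  have hslope := C.hc_slope hAs₀ (hcc.mono (Icc_subset_Icc htA le_rfl))
    (fun s hs => hder s (lt_of_le_of_lt htA hs.1) (lt_trans hs.2 hs₀c))
    (fun s hs => by
      rintro ⟨hz, -⟩
      exact absurd hz (hne s hs.1 hs.2.le))
  rw [hA2, C.K_zero] at hslope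
  have : C.K (ψ s₀).2 < 0 := by
    have h4 : -(C.K (ψ s₀).2) = -0 + (s₀ - A) := hslope
    linarith
  exact absurd (C.K_neg_iff.1 this) (not_lt.2 hpos.le)

/-- Persistence of an open condition to the right. -/
theorem persist {ψ : ℝ → ℝ × ℝ} {t : ℝ} (hψc : ContinuousOn ψ (Ici 0)) (ht : 0 ≤ t)
    {U : Set (ℝ × ℝ)} (hU : IsOpen U) (hmem : ψ t ∈ U) :
    ∃ w, t < w ∧ ∀ s ∈ Ico t w, ψ s ∈ U := by
  have h1 : ContinuousWithinAt ψ (Ici t) t :=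
    (hψc t ht).mono (fun r hr => le_trans ht hr)
  have h2 : ψ ⁻¹' U ∈ 𝓝[Ici t] t := h1.preimage_mem_nhdsWithin (hU.mem_nhds hmem)
  obtain ⟨w, hw, hsub⟩ := mem_nhdsGE_iff_exists_Ico_subset.1 h2
  exact ⟨w, hw, fun s hs => hsub hs⟩

/-- Uniqueness: any integral curve staying in `R` agrees with `Phi`. -/
theorem uniqueness {ψ : ℝ → ℝ × ℝ} {X : ℝ × ℝ} (hXR : X.1 * X.2 ≤ 0)
    (hψ : IsNetIntegralCurve C.F X ⊤ ψ)
    (hRt : ∀ t, 0 ≤ t → (ψ t).1 * (ψ t).2 ≤ 0) :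
    ∀ t, 0 ≤ t → ψ t = C.Phi X t := by
  have hψc : ContinuousOn ψ (Ici 0) := by
    have := hψ.2.2.1; rwa [eDom_top] at this
  have hψ0 : ψ 0 = X := hψ.2.1
  set τ1 := C.t1 X with hτ1def
  set τ2 := C.t2 X with hτ2def
  set τ := C.tm X with hτdef
  have hτ10 : 0 ≤ τ1 := C.t1_nonneg X
  have hτ20 : 0 ≤ τ2 := C.t2_nonneg X
  have hτ1τ : τ1 ≤ τ := C.t1_le_tm X
  have hτ2τ : τ2 ≤ τ := C.t2_le_tm X
  set g : ℝ → ℝ := fun t => C.G (ψ t).1 with hgdef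
  set h : ℝ → ℝ := fun t => -(C.K (ψ t).2) with hhdef
  set gT : ℝ → ℝ := fun t => C.g0 X + C.u1 X t with hgTdef
  set hT : ℝ → ℝ := fun t => C.h0 X + C.u2 X t with hhTdef
  -- target sign lemmas
  have hTA : ∀ s, τ1 ≤ s → 0 ≤ gT s := by
    intro s hs
    show 0 ≤ C.g0 X + C.u1 X s
    have e : C.u1 X s = τ1 + max (s - τ) 0 := by
      show min s τ1 + max (s - τ) 0 = τ1 + max (s - τ) 0
      rw [min_eq_right hs]
    rw [e, ← add_assoc, C.g0t1]
    have := le_max_right (C.g0 X) 0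
    have := le_max_right (s - τ) 0
    linarith
  have hTB : ∀ s, τ2 ≤ s → 0 ≤ hT s := by
    intro s hs
    show 0 ≤ C.h0 X + C.u2 X s
    have e : C.u2 X s = τ2 + max (s - τ) 0 := by
      show min s τ2 + max (s - τ) 0 = τ2 + max (s - τ) 0
      rw [min_eq_right hs]
    rw [e, ← add_assoc, C.h0t2]
    have := le_max_right (C.h0 X) 0
    have := le_max_right (s - τ) 0
    linarith
  have hτ1eq : ∀ s, 0 ≤ s → s < τ1 → τ1 = -(C.g0 X) := by
    intro s hs hlt
    rcases max_choice (-(C.g0 X)) (0:ℝ) with he | he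
    · exact he
    · exfalso; rw [hτ1def, t1, he] at hlt; linarith
  have hτ2eq : ∀ s, 0 ≤ s → s < τ2 → τ2 = -(C.h0 X) := by
    intro s hs hlt
    rcases max_choice (-(C.h0 X)) (0:ℝ) with he | he
    · exact he
    · exfalso; rw [hτ2def, t2, he] at hlt; linarith
  -- main interval claim
  have main : ∀ b, ∀ t ∈ Icc (0:ℝ) b, g t = gT t ∧ h t = hT t := by
    intro b
    set S := {t : ℝ | g t = gT t ∧ h t = hT t} with hSdef
    have hu1c : Continuous (C.u1 X) := by
      show Continuous fun t => min t τ1 + max (t - τ) 0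
      fun_prop
    have hu2c : Continuous (C.u2 X) := by
      show Continuous fun t => min t τ2 + max (t - τ) 0
      fun_prop
    have hgTc : Continuous gT := continuous_const.add hu1c
    have hhTc : Continuous hT := continuous_const.add hu2c
    apply IsClosed.Icc_subset_of_forall_exists_gt
    · -- closedness
      have hgc : ContinuousOn g (Icc 0 b) := by
        apply C.cG.comp_continuousOn
        exact continuous_fst.comp_continuousOn (hψc.mono (fun r hr => hr.1))
      have hhc : ContinuousOn h (Icc 0 b) := by
        apply ContinuousOn.neg
        apply C.cK.comp_continuousOn
        exact continuous_snd.comp_continuousOn (hψc.mono (fun r hr => hr.1))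
      have h1 : IsClosed (Icc 0 b ∩ (fun t => g t - gT t) ⁻¹' {0}) :=
        (hgc.sub hgTc.continuousOn).preimage_isClosed_of_isClosed isClosed_Icc
          isClosed_singleton
      have h2 : IsClosed (Icc 0 b ∩ (fun t => h t - hT t) ⁻¹' {0}) :=
        (hhc.sub hhTc.continuousOn).preimage_isClosed_of_isClosed isClosed_Icc
          isClosed_singleton
      show IsClosed (S ∩ Icc 0 b)
      have h3 : S ∩ Icc 0 b = (Icc 0 b ∩ (fun t => g t - gT t) ⁻¹' {0}) ∩
          (Icc 0 b ∩ (fun t => h t - hT t) ⁻¹' {0}) := by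
        ext r
        simp only [hSdef, mem_inter_iff, mem_setOf_eq, mem_preimage, mem_singleton_iff,
          sub_eq_zero]
        tauto
      rw [h3]
      exact h1.inter h2
    · -- 0 ∈ S
      constructor
      · show g 0 = gT 0
        have e : C.u1 X 0 = 0 := C.u1_eval hτ10 (C.tm_nonneg X)
        show C.G (ψ 0).1 = C.g0 X + C.u1 X 0
        rw [e, hψ0, add_zero]
        rfl
      · show h 0 = hT 0
        have e : C.u2 X 0 = 0 := C.u2_eval hτ20 (C.tm_nonneg X)
        show -(C.K (ψ 0).2) = C.h0 X + C.u2 X 0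
        rw [e, hψ0, add_zero]
        rfl
    · -- the induction step
      rintro x ⟨⟨hgx, hhx⟩, hx0, hxb⟩
      intro y hy
      rw [mem_Ioi] at hy
      obtain ⟨c, hxc, hder, -⟩ := C.piece hψ hx0
      -- sign dictionary at x
      rcases lt_or_ge (h x) 0 with hh | hh
      · -- ψ₂ x > 0
        have hψ2pos : 0 < (ψ x).2 := by
          have : 0 < C.K (ψ x).2 := by
            have : h x = -(C.K (ψ x).2) := rfl
            linarith [this ▸ hh]
          exact C.K_pos_iff.1 this
        have hxτ2 : x < τ2 := by
          by_contra hcon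
          push_neg at hcon
          have := hTB x hcon
          rw [← hhx] at this
          linarith
        have hxτ : x < τ := lt_of_lt_of_le hxτ2 hτ2τ
        have hψ1np : (ψ x).1 ≤ 0 := by nlinarith [hRt x hx0]
        rcases lt_or_ge (g x) 0 with hg | hg
        · -- Case Ia : both trains strictly moving
          have hψ1neg : (ψ x).1 < 0 := C.G_neg_iff.1 hg
          have hxτ1 : x < τ1 := by
            by_contra hcon
            push_neg at hcon
            have := hTA x hcon
            rw [← hgx] at this
            linarith
          obtain ⟨w, hxw, hw⟩ := persist hψc hx0
            (U := {p : ℝ × ℝ | p.1 < 0 ∧ 0 < p.2})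
            ((isOpen_lt continuous_fst continuous_const).inter
              (isOpen_lt continuous_const continuous_snd)) ⟨hψ1neg, hψ2pos⟩
          set δ := min w (min c (min τ1 τ2)) with hδdef
          have hxδ : x < δ := lt_min hxw (lt_min hxc (lt_min hxτ1 hxτ2))
          set x' := min y ((x + δ)/2) with hx'def
          have hxx' : x < x' := lt_min hy (by linarith)
          have hx'b : x' ≤ y := min_le_left _ _
          have hx'δ : x' < δ := lt_of_le_of_lt (min_le_right _ _) (by linarith)
          have hx'w : x' < w := lt_of_lt_of_le hx'δ (min_le_left _ _)
          have hx'c : x' < c := lt_of_lt_of_le hx'δ (le_trans (min_le_right _ _) (min_le_left _ _))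
          have hx'τ1 : x' ≤ τ1 := le_of_lt (lt_of_lt_of_le hx'δ
            (le_trans (min_le_right _ _) (le_trans (min_le_right _ _) (min_le_left _ _))))
          have hx'τ2 : x' ≤ τ2 := le_of_lt (lt_of_lt_of_le hx'δ
            (le_trans (min_le_right _ _) (le_trans (min_le_right _ _) (min_le_right _ _))))
          have hx'τ : x' ≤ τ := le_trans hx'τ1 hτ1τ
          have hcc : ContinuousOn ψ (Icc x x') := hψc.mono (fun r hr => le_trans hx0 hr.1)
          have hregs : ∀ s ∈ Ioo x x', (ψ s).1 < 0 ∧ 0 < (ψ s).2 := by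
            intro s hs
            exact hw s ⟨hs.1.le, lt_trans hs.2 hx'w⟩
          have hgs := C.gc_slope hxx' hcc
            (fun s hs => hder s hs.1 (lt_trans hs.2 hx'c))
            (fun s hs => by rintro ⟨hz, -⟩; exact absurd hz (hregs s hs).1.ne)
          have hhs := C.hc_slope hxx' hcc
            (fun s hs => hder s hs.1 (lt_trans hs.2 hx'c))
            (fun s hs => by rintro ⟨hz, -⟩; exact absurd hz (hregs s hs).2.ne')
          refine ⟨x', ⟨?_, ?_⟩, hxx', hx'b⟩
          · show g x' = gT x'
            have e' : C.u1 X x' = x' := C.u1_eval hx'τ1 hx'τ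
            have e : C.u1 X x = x := C.u1_eval hxτ1.le hxτ.le
            have : gT x' = gT x + (x' - x) := by
              show C.g0 X + C.u1 X x' = (C.g0 X + C.u1 X x) + (x' - x)
              rw [e, e']; ring
            rw [this, ← hgx]
            exact hgs
          · show h x' = hT x'
            have e' : C.u2 X x' = x' := C.u2_eval hx'τ2 hx'τ
            have e : C.u2 X x = x := C.u2_eval hxτ2.le hxτ.le
            have : hT x' = hT x + (x' - x) := by
              show C.h0 X + C.u2 X x' = (C.h0 X + C.u2 X x) + (x' - x)
              rw [e, e']; ring
            rw [this, ← hhx]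
            exact hhs
        · -- Case Ib : train 1 waits at the loop
          have hgx0 : g x = 0 := le_antisymm (C.G_nonpos_iff.2 hψ1np) hg
          have hψ1z : (ψ x).1 = 0 := C.G_eq_zero_iff.1 hgx0
          have hτ1x : τ1 ≤ x := by
            by_contra hcon
            push_neg at hcon
            have he1 : τ1 = -(C.g0 X) := hτ1eq x hx0 hcon
            have e : C.u1 X x = x := C.u1_eval hcon.le hxτ.le
            have : gT x = C.g0 X + x := by
              show C.g0 X + C.u1 X x = _
              rw [e]
            rw [← hgx, hgx0] at this
            rw [he1] at hcon
            linarith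
          obtain ⟨w, hxw, hw⟩ := persist hψc hx0
            (U := {p : ℝ × ℝ | 0 < p.2})
            (isOpen_lt continuous_const continuous_snd) hψ2pos
          set δ := min w (min c τ2) with hδdef
          have hxδ : x < δ := lt_min hxw (lt_min hxc hxτ2)
          set x' := min y ((x + δ)/2) with hx'def
          have hxx' : x < x' := lt_min hy (by linarith)
          have hx'b : x' ≤ y := min_le_left _ _
          have hx'δ : x' < δ := lt_of_le_of_lt (min_le_right _ _) (by linarith)
          have hx'w : x' < w := lt_of_lt_of_le hx'δ (min_le_left _ _)
          have hx'c : x' < c := lt_of_lt_of_le hx'δ (le_trans (min_le_right _ _) (min_le_left _ _))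
          have hx'τ2 : x' ≤ τ2 := le_of_lt (lt_of_lt_of_le hx'δ
            (le_trans (min_le_right _ _) (min_le_right _ _)))
          have hx'τ : x' ≤ τ := le_trans hx'τ2 hτ2τ
          have hcc : ContinuousOn ψ (Icc x x') := hψc.mono (fun r hr => le_trans hx0 hr.1)
          have hpos2 : ∀ s ∈ Icc x x', 0 < (ψ s).2 := by
            intro s hs
            exact hw s ⟨hs.1, lt_of_le_of_lt hs.2 hx'w⟩
          have hzero1 : ∀ s ∈ Icc x x', (ψ s).1 = 0 := by
            intro s hs
            have hle : (ψ s).1 ≤ 0 := by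
              nlinarith [hRt s (le_trans hx0 hs.1), hpos2 s hs]
            have hge : 0 ≤ (ψ s).1 := C.no_neg_excursion hψc hx0 hder
              (by rw [hψ1z]) hs.1 (lt_of_le_of_lt hs.2 hx'c)
            linarith
          have hhs := C.hc_slope hxx' hcc
            (fun s hs => hder s hs.1 (lt_trans hs.2 hx'c))
            (fun s hs => by
              rintro ⟨hz, -⟩
              exact absurd hz (hpos2 s ⟨hs.1.le, hs.2.le⟩).ne')
          refine ⟨x', ⟨?_, ?_⟩, hxx', hx'b⟩
          · show g x' = gT x'
            have e' : C.u1 X x' = τ1 := C.u1_eval' (le_trans hτ1x hxx'.le) hx'τ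
            have e : C.u1 X x = τ1 := C.u1_eval' hτ1x hxτ.le
            have hgTe : gT x' = gT x := by
              show C.g0 X + C.u1 X x' = C.g0 X + C.u1 X x
              rw [e, e']
            rw [hgTe, ← hgx, hgx0]
            show C.G (ψ x').1 = 0
            rw [hzero1 x' ⟨hxx'.le, le_rfl⟩, C.G_zero]
          · show h x' = hT x'
            have e' : C.u2 X x' = x' := C.u2_eval hx'τ2 hx'τ
            have e : C.u2 X x = x := C.u2_eval hxτ2.le hxτ.le
            have : hT x' = hT x + (x' - x) := by
              show C.h0 X + C.u2 X x' = (C.h0 X + C.u2 X x) + (x' - x)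
              rw [e, e']; ring
            rw [this, ← hhx]
            exact hhs
      · -- 0 ≤ h x : ψ₂ x ≤ 0
        have hψ2np : (ψ x).2 ≤ 0 := by
          have : C.K (ψ x).2 ≤ 0 := by
            have : h x = -(C.K (ψ x).2) := rfl
            linarith [this ▸ hh]
          exact C.P₂.p_nonpos_iff.1 this
        rcases lt_or_ge (g x) 0 with hg | hg
        · -- Case II : train 2 waits at the loop
          have hψ1neg : (ψ x).1 < 0 := C.G_neg_iff.1 hg
          have hψ2nn : 0 ≤ (ψ x).2 := by nlinarith [hRt x hx0]
          have hψ2z : (ψ x).2 = 0 := le_antisymm hψ2np hψ2nn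
          have hhx0 : h x = 0 := by
            show -(C.K (ψ x).2) = 0
            rw [hψ2z, C.K_zero, neg_zero]
          have hxτ1 : x < τ1 := by
            by_contra hcon
            push_neg at hcon
            have := hTA x hcon
            rw [← hgx] at this
            linarith
          have hxτ : x < τ := lt_of_lt_of_le hxτ1 hτ1τ
          have hτ2x : τ2 ≤ x := by
            by_contra hcon
            push_neg at hcon
            have he2 : τ2 = -(C.h0 X) := hτ2eq x hx0 hcon
            have e : C.u2 X x = x := C.u2_eval hcon.le hxτ.le
            have : hT x = C.h0 X + x := by
              show C.h0 X + C.u2 X x = _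
              rw [e]
            rw [← hhx, hhx0] at this
            rw [he2] at hcon
            linarith
          obtain ⟨w, hxw, hw⟩ := persist hψc hx0
            (U := {p : ℝ × ℝ | p.1 < 0})
            (isOpen_lt continuous_fst continuous_const) hψ1neg
          set δ := min w (min c τ1) with hδdef
          have hxδ : x < δ := lt_min hxw (lt_min hxc hxτ1)
          set x' := min y ((x + δ)/2) with hx'def
          have hxx' : x < x' := lt_min hy (by linarith)
          have hx'b : x' ≤ y := min_le_left _ _
          have hx'δ : x' < δ := lt_of_le_of_lt (min_le_right _ _) (by linarith)
          have hx'w : x' < w := lt_of_lt_of_le hx'δ (min_le_left _ _)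
          have hx'c : x' < c := lt_of_lt_of_le hx'δ (le_trans (min_le_right _ _) (min_le_left _ _))
          have hx'τ1 : x' ≤ τ1 := le_of_lt (lt_of_lt_of_le hx'δ
            (le_trans (min_le_right _ _) (min_le_right _ _)))
          have hx'τ : x' ≤ τ := le_trans hx'τ1 hτ1τ
          have hcc : ContinuousOn ψ (Icc x x') := hψc.mono (fun r hr => le_trans hx0 hr.1)
          have hneg1 : ∀ s ∈ Icc x x', (ψ s).1 < 0 := by
            intro s hs
            exact hw s ⟨hs.1, lt_of_le_of_lt hs.2 hx'w⟩
          have hzero2 : ∀ s ∈ Icc x x', (ψ s).2 = 0 := by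
            intro s hs
            have hge : 0 ≤ (ψ s).2 := by
              nlinarith [hRt s (le_trans hx0 hs.1), hneg1 s hs]
            have hle : (ψ s).2 ≤ 0 := C.no_pos_excursion hψc hx0 hder
              (by rw [hψ2z]) hs.1 (lt_of_le_of_lt hs.2 hx'c)
            linarith
          have hgs := C.gc_slope hxx' hcc
            (fun s hs => hder s hs.1 (lt_trans hs.2 hx'c))
            (fun s hs => by
              rintro ⟨hz, -⟩
              exact absurd hz (hneg1 s ⟨hs.1.le, hs.2.le⟩).ne)
          refine ⟨x', ⟨?_, ?_⟩, hxx', hx'b⟩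
          · show g x' = gT x'
            have e' : C.u1 X x' = x' := C.u1_eval hx'τ1 hx'τ
            have e : C.u1 X x = x := C.u1_eval hxτ1.le hxτ.le
            have : gT x' = gT x + (x' - x) := by
              show C.g0 X + C.u1 X x' = (C.g0 X + C.u1 X x) + (x' - x)
              rw [e, e']; ring
            rw [this, ← hgx]
            exact hgs
          · show h x' = hT x'
            have e' : C.u2 X x' = τ2 := C.u2_eval' (le_trans hτ2x hxx'.le) hx'τ
            have e : C.u2 X x = τ2 := C.u2_eval' hτ2x hxτ.le
            have hhTe : hT x' = hT x := by
              show C.h0 X + C.u2 X x' = C.h0 X + C.u2 X x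
              rw [e, e']
            rw [hhTe, ← hhx, hhx0]
            show -(C.K (ψ x').2) = 0
            rw [hzero2 x' ⟨hxx'.le, le_rfl⟩, C.K_zero, neg_zero]
        · -- Case III : both trains past the loop
          have hψ1nn : 0 ≤ (ψ x).1 := C.G_nonneg_iff.1 hg
          have hτ1x : τ1 ≤ x := by
            by_contra hcon
            push_neg at hcon
            have he1 : τ1 = -(C.g0 X) := hτ1eq x hx0 hcon
            have e : C.u1 X x = x := C.u1_eval hcon.le (le_trans hcon.le hτ1τ)
            have : gT x = C.g0 X + x := by
              show C.g0 X + C.u1 X x = _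
              rw [e]
            rw [← hgx] at this
            rw [he1] at hcon
            linarith
          have hτ2x : τ2 ≤ x := by
            by_contra hcon
            push_neg at hcon
            have he2 : τ2 = -(C.h0 X) := hτ2eq x hx0 hcon
            have e : C.u2 X x = x := C.u2_eval hcon.le (le_trans hcon.le hτ2τ)
            have : hT x = C.h0 X + x := by
              show C.h0 X + C.u2 X x = _
              rw [e]
            rw [← hhx] at this
            rw [he2] at hcon
            linarith
          have hτx : τ ≤ x := max_le hτ1x hτ2x
          set x' := min y ((x + c)/2) with hx'def
          have hxx' : x < x' := lt_min hy (by linarith)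
          have hx'b : x' ≤ y := min_le_left _ _
          have hx'c : x' < c := lt_of_le_of_lt (min_le_right _ _) (by linarith)
          have hcc : ContinuousOn ψ (Icc x x') := hψc.mono (fun r hr => le_trans hx0 hr.1)
          have hnn1 : ∀ s ∈ Icc x x', 0 ≤ (ψ s).1 := by
            intro s hs
            exact C.no_neg_excursion hψc hx0 hder hψ1nn hs.1 (lt_of_le_of_lt hs.2 hx'c)
          have hnp2 : ∀ s ∈ Icc x x', (ψ s).2 ≤ 0 := by
            intro s hs
            exact C.no_pos_excursion hψc hx0 hder hψ2np hs.1 (lt_of_le_of_lt hs.2 hx'c)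
          have hgs := C.gc_slope hxx' hcc
            (fun s hs => hder s hs.1 (lt_trans hs.2 hx'c))
            (fun s hs => by
              rintro ⟨-, hz⟩
              exact absurd hz (not_lt.2 (hnp2 s ⟨hs.1.le, hs.2.le⟩)))
          have hhs := C.hc_slope hxx' hcc
            (fun s hs => hder s hs.1 (lt_trans hs.2 hx'c))
            (fun s hs => by
              rintro ⟨-, hz⟩
              exact absurd hz (not_lt.2 (hnn1 s ⟨hs.1.le, hs.2.le⟩)))
          refine ⟨x', ⟨?_, ?_⟩, hxx', hx'b⟩
          · show g x' = gT x'
            have e' : C.u1 X x' = τ1 + (x' - τ) := C.u1_eval'' (le_trans hτx hxx'.le)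
            have e : C.u1 X x = τ1 + (x - τ) := C.u1_eval'' hτx
            have : gT x' = gT x + (x' - x) := by
              show C.g0 X + C.u1 X x' = (C.g0 X + C.u1 X x) + (x' - x)
              rw [e, e']; ring
            rw [this, ← hgx]
            exact hgs
          · show h x' = hT x'
            have e' : C.u2 X x' = τ2 + (x' - τ) := C.u2_eval'' (le_trans hτx hxx'.le)
            have e : C.u2 X x = τ2 + (x - τ) := C.u2_eval'' hτx
            have : hT x' = hT x + (x' - x) := by
              show C.h0 X + C.u2 X x' = (C.h0 X + C.u2 X x) + (x' - x)
              rw [e, e']; ring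
            rw [this, ← hhx]
            exact hhs
  -- conclude
  intro t ht
  obtain ⟨h1, h2⟩ := main t t ⟨ht, le_rfl⟩
  have e1 : (ψ t).1 = (C.Phi X t).1 := by
    have := congrArg C.Gi h1
    show (ψ t).1 = C.Gi (C.g0 X + C.u1 X t)
    rw [← this]
    show (ψ t).1 = C.P₁.q (C.P₁.p (ψ t).1)
    rw [C.P₁.qp]
  have e2 : (ψ t).2 = (C.Phi X t).2 := by
    have h2' : C.K (ψ t).2 = -(C.h0 X + C.u2 X t) := by
      have : -(C.K (ψ t).2) = C.h0 X + C.u2 X t := h2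
      linarith
    have := congrArg C.Ki h2'
    show (ψ t).2 = C.Ki (-(C.h0 X + C.u2 X t))
    rw [← this]
    show (ψ t).2 = C.P₂.q (C.P₂.p (ψ t).2)
    rw [C.P₂.qp]
  exact Prod.ext e1 e2

end TCtx

end TrainAux

/-- Train dynamics on a single track line with a passing loop at `0`
and zero waiting thresholds. Let `V₁ > 0 > V₂` be bounded `C¹` velocity fields, let
`ℝ²_∘ = {x₁x₂ ≤ 0}` and let `F` stop train 1 on `{x₁ = 0, x₂ > 0}` and train 2 on
`{x₂ = 0, x₁ < 0}`. Then `ℝ²_∘` is positively invariant, through every point of `ℝ²_∘`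
there is a unique complete integral curve of `F` remaining in `ℝ²_∘`, and the resulting
semiflow `Φ* : ℝ²_∘ × ℝ₊ → ℝ²_∘` is continuous. -/
theorem train_dynamics_semiflow
    (V₁ V₂ : ℝ → ℝ) (hV₁ : ContDiff ℝ 1 V₁) (hV₂ : ContDiff ℝ 1 V₂)
    (hbdd : ∃ M : ℝ, ∀ x : ℝ, |V₁ x| ≤ M ∧ |V₂ x| ≤ M)
    (hsign : ∀ x : ℝ, V₂ x < 0 ∧ 0 < V₁ x)
    (F : ℝ × ℝ → ℝ × ℝ)
    (hFdef : F = fun X =>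
      if X.1 = 0 ∧ 0 < X.2 then ((0 : ℝ), V₂ X.2)
      else if X.2 = 0 ∧ X.1 < 0 then (V₁ X.1, (0 : ℝ))
      else (V₁ X.1, V₂ X.2))
    (R : Set (ℝ × ℝ)) (hR : R = {X : ℝ × ℝ | X.1 * X.2 ≤ 0}) :
    (∀ X ∈ R, ∀ ψ : ℝ → ℝ × ℝ, IsNetIntegralCurve F X (⊤ : EReal) ψ →
      ∀ t : ℝ, 0 ≤ t → ψ t ∈ R) ∧
    ∃ Φ : ℝ × ℝ → ℝ → ℝ × ℝ,
      (∀ X ∈ R, IsNetIntegralCurve F X (⊤ : EReal) (Φ X) ∧ ∀ t : ℝ, 0 ≤ t → Φ X t ∈ R) ∧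
      (∀ X ∈ R, ∀ ψ : ℝ → ℝ × ℝ, IsNetIntegralCurve F X (⊤ : EReal) ψ →
        (∀ t : ℝ, 0 ≤ t → ψ t ∈ R) → ∀ t : ℝ, 0 ≤ t → ψ t = Φ X t) ∧
      ContinuousOn (fun p : (ℝ × ℝ) × ℝ => Φ p.1 p.2) (R ×ˢ Ici (0 : ℝ)) := by
  obtain ⟨M, hM⟩ := hbdd
  have P₁ : TPack V₁ := mkTPack V₁ hV₁.continuous (fun x => (hsign x).2) M
    (fun x => le_trans (le_abs_self _) (hM x).1)
  have P₂ : TPack (fun x => -V₂ x) := mkTPack _ hV₂.continuous.neg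
    (fun x => neg_pos.2 (hsign x).1) M (fun x => le_trans (neg_le_abs _) (hM x).2)
  set C : TCtx := ⟨V₁, V₂, F, P₁, P₂, hsign, hV₁.continuous, hV₂.continuous, hFdef⟩ with hC
  subst hR
  constructor
  · intro X hX ψ hψ t ht
    exact C.invariance hX hψ t ht
  · refine ⟨C.Phi, ?_, ?_, ?_⟩
    · intro X hX
      exact ⟨C.Phi_curve X hX, fun t ht => C.Phi_mem_R hX ht⟩
    · intro X hX ψ hψ hmem t ht
      exact C.uniqueness hX hψ (fun s hs => hmem s hs) t ht
    · exact C.Phi_cont.continuousOn
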